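/- arXiv:2010.11256 — 2 statements merged into one kernel-verified Lean document; each statement's English description precedes it below -/
import Mathlib

section
/- Let f : S¹ → S¹ be an expansive covering map, let a ∈ S¹ be a periodic point of f, and let f_a be the first orientation-preserving return map of f to a. If the one-sided multiplier λ(a⁺) (respectively λ(a⁻)) exists, then λ(a⁺) ≥ 1 (respectively λ(a⁻) ≥ 1). -/
open Set Filter

noncomputable section

/-- The unit circle in `ℂ`. -/
def S1 : Set ℂ := {z : ℂ | ‖z‖ = 1}

/-- The parametrization `x ↦ e^{2πix}` of the unit circle. -/
noncomputable def expMap (x : ℝ) : ℂ := Complex.exp (2 * Real.pi * Complex.I * x)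

/-- The closed positively oriented arc from `a` to `b` on the unit circle. -/
def closedArc (a b : ℂ) : Set ℂ :=
  {z : ℂ | ∃ s t u : ℝ, a = expMap s ∧ z = expMap t ∧ b = expMap u ∧
    s ≤ t ∧ t ≤ u ∧ u < s + 1}

/-- The open positively oriented arc from `a` to `b` on the unit circle. -/
def openArc (a b : ℂ) : Set ℂ :=
  {z : ℂ | ∃ s t u : ℝ, a = expMap s ∧ z = expMap t ∧ b = expMap u ∧
    s < t ∧ t < u ∧ u < s + 1}

/-- `f` restricted to the unit circle is a covering of signed degree `d`:
it lifts under `x ↦ e^{2πix}` to a continuous map `F` with `F (x+1) = F x + d`.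
`d > 0` corresponds to an orientation-preserving covering of degree `d`, and
`d < 0` to an orientation-reversing covering of degree `|d|`. -/
def IsCircleCovering (f : ℂ → ℂ) (d : ℤ) : Prop :=
  ∃ F : ℝ → ℝ, Continuous F ∧ (∀ x : ℝ, f (expMap x) = expMap (F x)) ∧
    ∀ x : ℝ, F (x + 1) = F x + d

/-- The iterate `f^[m]` is an orientation-preserving circle covering. -/
def OrientPresIter (f : ℂ → ℂ) (m : ℕ) : Prop :=
  ∃ e : ℤ, 0 < e ∧ IsCircleCovering (f^[m]) e

/-- The iterate `f^[m]` is an orientation-reversing circle covering. -/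
def OrientRevIter (f : ℂ → ℂ) (m : ℕ) : Prop :=
  ∃ e : ℤ, e < 0 ∧ IsCircleCovering (f^[m]) e

/-- Expansivity of `f` on the unit circle. -/
def ExpansiveOn (f : ℂ → ℂ) : Prop :=
  ∃ δ : ℝ, 0 < δ ∧ ∀ a ∈ S1, ∀ b ∈ S1, a ≠ b →
    ∃ n : ℕ, δ < ‖f^[n] a - f^[n] b‖

/-- `h` is an orientation-preserving homeomorphism of the unit circle:
it lifts to a continuous strictly increasing map `H : ℝ → ℝ` commuting with `x ↦ x + 1`. -/
def OPCircleHomeo (h : ℂ → ℂ) : Prop :=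
  ∃ H : ℝ → ℝ, Continuous H ∧ StrictMono H ∧ (∀ x : ℝ, H (x + 1) = H x + 1) ∧
    ∀ x : ℝ, h (expMap x) = expMap (H x)

/-- A Markov partition `P(f; {a₀, …, a_r})` for a circle covering `f`. -/
structure MarkovPartition (f : ℂ → ℂ) (r : ℕ) (a : Fin (r + 1) → ℂ) : Prop where
  rpos : 1 ≤ r
  /-- The points `a₀, …, a_r` lie on the unit circle in positive cyclic order. -/
  cyclic : ∃ x : Fin (r + 1) → ℝ, StrictMono x ∧ (∀ k, a k = expMap (x k)) ∧
    x (Fin.last r) < x 0 + 1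
  /-- The closed arcs `A_k = [a_k, a_{k+1}]` cover the circle. -/
  cover : S1 ⊆ ⋃ k, closedArc (a k) (a (k + 1))
  /-- The arcs have pairwise disjoint interiors. -/
  disjInt : ∀ k j : Fin (r + 1), k ≠ j →
    openArc (a k) (a (k + 1)) ∩ openArc (a j) (a (j + 1)) = ∅
  /-- `f` is injective on each open arc. -/
  injOn : ∀ k, Set.InjOn f (openArc (a k) (a (k + 1)))
  /-- The Markov property. -/
  markov : ∀ k j : Fin (r + 1),
    (f '' openArc (a k) (a (k + 1)) ∩ openArc (a j) (a (j + 1))).Nonempty →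
    openArc (a j) (a (j + 1)) ⊆ f '' openArc (a k) (a (k + 1))
  /-- The set `{a₀, …, a_r}` is forward invariant. -/
  invariant : ∀ k, ∃ j, f (a k) = a j

/-- Condition (uv): piecewise conformal extensions on open sets `U_k`, `V_k` with
`⋃ {U_j : A_j ⊆ f(A_k)} ⊆ V_k`. -/
def CondUV (f : ℂ → ℂ) (r : ℕ) (a : Fin (r + 1) → ℂ) : Prop :=
  ∃ (U V : Fin (r + 1) → Set ℂ) (fk : Fin (r + 1) → ℂ → ℂ),
    (∀ k, IsOpen (U k)) ∧ (∀ k, IsOpen (V k)) ∧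
    (∀ k, openArc (a k) (a (k + 1)) ⊆ U k) ∧
    (∀ k, f '' openArc (a k) (a (k + 1)) ⊆ V k) ∧
    (∀ k, Set.InjOn (fk k) (U k)) ∧
    (∀ k, DifferentiableOn ℂ (fk k) (U k)) ∧
    (∀ k, fk k '' U k = V k) ∧
    (∀ k, Set.EqOn (fk k) f (openArc (a k) (a (k + 1)))) ∧
    (∀ k j, openArc (a j) (a (j + 1)) ⊆ f '' openArc (a k) (a (k + 1)) → U j ⊆ V k)

/-- Condition (hol): the restriction of `f` to each closed arc of the partition extends
holomorphically to a neighborhood of either endpoint. -/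
def CondHol (f : ℂ → ℂ) (r : ℕ) (a : Fin (r + 1) → ℂ) : Prop :=
  ∀ k : Fin (r + 1),
    (∃ W : Set ℂ, IsOpen W ∧ a k ∈ W ∧ ∃ g : ℂ → ℂ, DifferentiableOn ℂ g W ∧
      Set.EqOn g f (W ∩ closedArc (a k) (a (k + 1)))) ∧
    (∃ W : Set ℂ, IsOpen W ∧ a (k + 1) ∈ W ∧ ∃ g : ℂ → ℂ, DifferentiableOn ℂ g W ∧
      Set.EqOn g f (W ∩ closedArc (a k) (a (k + 1))))

/-- `q` is the orientation-preserving period of the periodic point `a`: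
the least `n ≥ 1` with `f^[n] a = a` and `f^[n]` orientation-preserving. -/
def OPPeriod (f : ℂ → ℂ) (a : ℂ) (q : ℕ) : Prop :=
  0 < q ∧ f^[q] a = a ∧ OrientPresIter f q ∧
    ∀ m : ℕ, 0 < m → m < q → ¬(f^[m] a = a ∧ OrientPresIter f m)

/-- The one-sided multiplier `λ(a⁺)` of the first return map `f^[q]` exists and equals `lam`. -/
def HasMultiplierPlus (f : ℂ → ℂ) (a : ℂ) (q : ℕ) (lam : ℝ) : Prop :=
  0 ≤ lam ∧ ∃ z₀ ∈ S1, z₀ ≠ a ∧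
    Filter.Tendsto (fun z : ℂ => (f^[q] z - a) / (z - a))
      (nhdsWithin a (openArc a z₀)) (nhds (lam : ℂ))

/-- The one-sided multiplier `λ(a⁻)` of the first return map `f^[q]` exists and equals `lam`. -/
def HasMultiplierMinus (f : ℂ → ℂ) (a : ℂ) (q : ℕ) (lam : ℝ) : Prop :=
  0 ≤ lam ∧ ∃ z₀ ∈ S1, z₀ ≠ a ∧
    Filter.Tendsto (fun z : ℂ => (f^[q] z - a) / (z - a))
      (nhdsWithin a (openArc z₀ a)) (nhds (lam : ℂ))

/-- `a` is an isolated fixed point (on the circle) of the return map `f^[q]`. -/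
def IsolatedFixedPt (f : ℂ → ℂ) (a : ℂ) (q : ℕ) : Prop :=
  ∃ ε : ℝ, 0 < ε ∧ ∀ z ∈ S1, z ≠ a → ‖z - a‖ < ε → f^[q] z ≠ z

/-- The return map `f^[q]` has, on the positive side of `a`, a holomorphic extension
with Taylor expansion `z + c (z - a)^(N+1) + O((z - a)^(N+2))`, `c ≠ 0`;
i.e. the parabolic point `a⁺` has `N(a⁺) = N`. -/
def TaylorPlus (f : ℂ → ℂ) (a : ℂ) (q : ℕ) (N : ℕ) : Prop :=
  0 < N ∧ ∃ z₁ ∈ S1, z₁ ≠ a ∧ ∃ W : Set ℂ, IsOpen W ∧ closedArc a z₁ ⊆ W ∧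
    ∃ g : ℂ → ℂ, DifferentiableOn ℂ g W ∧ Set.EqOn g (f^[q]) (closedArc a z₁) ∧
      ∃ c : ℂ, c ≠ 0 ∧
        Asymptotics.IsBigO (nhds a)
          (fun z : ℂ => g z - z - c * (z - a) ^ (N + 1))
          (fun z : ℂ => (z - a) ^ (N + 2))

/-- Negative-side version of `TaylorPlus`: the parabolic point `a⁻` has `N(a⁻) = N`. -/
def TaylorMinus (f : ℂ → ℂ) (a : ℂ) (q : ℕ) (N : ℕ) : Prop :=
  0 < N ∧ ∃ z₁ ∈ S1, z₁ ≠ a ∧ ∃ W : Set ℂ, IsOpen W ∧ closedArc z₁ a ⊆ W ∧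
    ∃ g : ℂ → ℂ, DifferentiableOn ℂ g W ∧ Set.EqOn g (f^[q]) (closedArc z₁ a) ∧
      ∃ c : ℂ, c ≠ 0 ∧
        Asymptotics.IsBigO (nhds a)
          (fun z : ℂ => g z - z - c * (z - a) ^ (N + 1))
          (fun z : ℂ => (z - a) ^ (N + 2))

/-- No iterate `f^[m'] a` with `m' < m` is a periodic point; used to express that
`m` is the minimal integer with `f^[m] a` periodic. -/
def MinPreperiod (f : ℂ → ℂ) (a : ℂ) (m : ℕ) : Prop :=
  ∀ m' : ℕ, m' < m → ¬ ∃ n : ℕ, 0 < n ∧ f^[n] (f^[m'] a) = f^[m'] a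

/-- `q` is the orientation-preserving period of the (pre)periodic point `a`. -/
def PrePeriodOf (f : ℂ → ℂ) (a : ℂ) (q : ℕ) : Prop :=
  ∃ m : ℕ, MinPreperiod f a m ∧ OPPeriod f (f^[m] a) q

/-- `a⁺` is hyperbolic with multiplier `lam > 1` (for preperiodic `a`, the multiplier is
taken at the periodic point on the orbit, with sides swapped if the connecting iterate
is orientation-reversing). -/
def SideHypPlus (f : ℂ → ℂ) (a : ℂ) (lam : ℝ) : Prop :=
  1 < lam ∧ ∃ m q : ℕ, MinPreperiod f a m ∧ OPPeriod f (f^[m] a) q ∧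
    ((OrientPresIter f m ∧ HasMultiplierPlus f (f^[m] a) q lam) ∨
     (OrientRevIter f m ∧ HasMultiplierMinus f (f^[m] a) q lam))

/-- `a⁻` is hyperbolic with multiplier `lam > 1`. -/
def SideHypMinus (f : ℂ → ℂ) (a : ℂ) (lam : ℝ) : Prop :=
  1 < lam ∧ ∃ m q : ℕ, MinPreperiod f a m ∧ OPPeriod f (f^[m] a) q ∧
    ((OrientPresIter f m ∧ HasMultiplierMinus f (f^[m] a) q lam) ∨
     (OrientRevIter f m ∧ HasMultiplierPlus f (f^[m] a) q lam))

/-- `a⁺` is parabolic: the one-sided multiplier equals `1` and the relevant periodic point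
is an isolated fixed point of its first return map. -/
def SideParPlus (f : ℂ → ℂ) (a : ℂ) : Prop :=
  ∃ m q : ℕ, MinPreperiod f a m ∧ OPPeriod f (f^[m] a) q ∧
    IsolatedFixedPt f (f^[m] a) q ∧
    ((OrientPresIter f m ∧ HasMultiplierPlus f (f^[m] a) q 1) ∨
     (OrientRevIter f m ∧ HasMultiplierMinus f (f^[m] a) q 1))

/-- `a⁻` is parabolic. -/
def SideParMinus (f : ℂ → ℂ) (a : ℂ) : Prop :=
  ∃ m q : ℕ, MinPreperiod f a m ∧ OPPeriod f (f^[m] a) q ∧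
    IsolatedFixedPt f (f^[m] a) q ∧
    ((OrientPresIter f m ∧ HasMultiplierMinus f (f^[m] a) q 1) ∨
     (OrientRevIter f m ∧ HasMultiplierPlus f (f^[m] a) q 1))

/-- `a⁺` is parabolic with multiplicity data `N(a⁺) = N`. -/
def SideParPlusN (f : ℂ → ℂ) (a : ℂ) (N : ℕ) : Prop :=
  ∃ m q : ℕ, MinPreperiod f a m ∧ OPPeriod f (f^[m] a) q ∧
    IsolatedFixedPt f (f^[m] a) q ∧
    ((OrientPresIter f m ∧ HasMultiplierPlus f (f^[m] a) q 1 ∧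
        TaylorPlus f (f^[m] a) q N) ∨
     (OrientRevIter f m ∧ HasMultiplierMinus f (f^[m] a) q 1 ∧
        TaylorMinus f (f^[m] a) q N))

/-- `a⁻` is parabolic with multiplicity data `N(a⁻) = N`. -/
def SideParMinusN (f : ℂ → ℂ) (a : ℂ) (N : ℕ) : Prop :=
  ∃ m q : ℕ, MinPreperiod f a m ∧ OPPeriod f (f^[m] a) q ∧
    IsolatedFixedPt f (f^[m] a) q ∧
    ((OrientPresIter f m ∧ HasMultiplierMinus f (f^[m] a) q 1 ∧
        TaylorMinus f (f^[m] a) q N) ∨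
     (OrientRevIter f m ∧ HasMultiplierPlus f (f^[m] a) q 1 ∧
        TaylorPlus f (f^[m] a) q N))

/-- `a` is symmetrically hyperbolic: `λ(a⁺) = λ(a⁻) > 1`. -/
def SymmHyperbolic (f : ℂ → ℂ) (a : ℂ) : Prop :=
  ∃ lam : ℝ, SideHypPlus f a lam ∧ SideHypMinus f a lam

/-- `a` is symmetrically parabolic: both sides parabolic with `N(a⁺) = N(a⁻)`. -/
def SymmParabolic (f : ℂ → ℂ) (a : ℂ) : Prop :=
  ∃ N : ℕ, SideParPlusN f a N ∧ SideParMinusN f a N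

/-- The distortion function `ρ_h(z, t)` of a circle homeomorphism `h`. -/
noncomputable def distortionAt (h : ℂ → ℂ) (z : ℂ) (t : ℝ) : ℝ :=
  max (‖h (expMap t * z) - h z‖ / ‖h (expMap (-t) * z) - h z‖)
      (‖h (expMap (-t) * z) - h z‖ / ‖h (expMap t * z) - h z‖)

/-- Condition (H/P→H/P): there is `μ > 0` matching parabolic sides of `a` to parabolic sides
of `b` with `N(a^±) = μ · N(b^±)`, and hyperbolic sides to hyperbolic sides with
`λ(b^±) = λ(a^±)^μ`. -/
def CondHH (f g : ℂ → ℂ) (a b : ℂ) : Prop :=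
  ∃ μ : ℝ, 0 < μ ∧
    (∀ N : ℕ, SideParPlusN f a N → ∃ N' : ℕ, SideParPlusN g b N' ∧ (N : ℝ) = μ * N') ∧
    (∀ N : ℕ, SideParMinusN f a N → ∃ N' : ℕ, SideParMinusN g b N' ∧ (N : ℝ) = μ * N') ∧
    (∀ lam : ℝ, SideHypPlus f a lam → SideHypPlus g b (lam ^ μ)) ∧
    (∀ lam : ℝ, SideHypMinus f a lam → SideHypMinus g b (lam ^ μ))

/-- Condition (H→P): `a⁺` and `a⁻` are hyperbolic and `b` is symmetrically parabolic. -/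
def CondHP (f g : ℂ → ℂ) (a b : ℂ) : Prop :=
  (∃ lam : ℝ, SideHypPlus f a lam) ∧ (∃ lam : ℝ, SideHypMinus f a lam) ∧ SymmParabolic g b

/-- The set `F_n = (f^[n-1])⁻¹({a₀, …, a_r}) ∩ S¹`. -/
def Fset (f : ℂ → ℂ) {r : ℕ} (a : Fin (r + 1) → ℂ) (n : ℕ) : Set ℂ :=
  {z : ℂ | z ∈ S1 ∧ f^[n - 1] z ∈ Set.range a}

/-- `A` is a complementary arc of `F_n`: the closure of a connected component
of `S¹ ∖ F_n`. -/
def IsComplArc (f : ℂ → ℂ) {r : ℕ} (a : Fin (r + 1) → ℂ) (n : ℕ) (A : Set ℂ) : Prop :=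
  ∃ z ∈ S1 \ Fset f a n, A = closure (connectedComponentIn (S1 \ Fset f a n) z)

/-- `φ` has relative distortion bounded by `M` on `X`. -/
def RelDistBdd (φ : ℂ → ℂ) (X : Set ℂ) (M : ℝ) : Prop :=
  ∀ A B : Set ℂ, A ⊆ X → B ⊆ X → 0 < Metric.diam B → 0 < Metric.diam (φ '' B) →
    M⁻¹ * (Metric.diam A / Metric.diam B) ≤ Metric.diam (φ '' A) / Metric.diam (φ '' B) ∧
    Metric.diam (φ '' A) / Metric.diam (φ '' B) ≤ M * (Metric.diam A / Metric.diam B)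

/-- `J` is a Jordan curve in `ℂ`. -/
def JordanCurve (J : Set ℂ) : Prop :=
  ∃ γ : ℂ → ℂ, ContinuousOn γ S1 ∧ Set.InjOn γ S1 ∧ γ '' S1 = J

/-- `J` is a welding curve for the circle homeomorphism `h`. -/
def IsWeldingPair (h : ℂ → ℂ) (J : Set ℂ) : Prop :=
  JordanCurve J ∧
  ∃ U V : Set ℂ, IsOpen U ∧ IsOpen V ∧ IsConnected U ∧ IsConnected V ∧
    Bornology.IsBounded U ∧ ¬ Bornology.IsBounded V ∧ Disjoint U V ∧
    U ∪ V = {z : ℂ | z ∉ J} ∧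
    ∃ H₁ H₂ : ℂ → ℂ,
      ContinuousOn H₁ (Metric.closedBall 0 1) ∧
      Set.InjOn H₁ (Metric.closedBall 0 1) ∧
      DifferentiableOn ℂ H₁ (Metric.ball 0 1) ∧
      H₁ '' Metric.ball 0 1 = U ∧
      H₁ '' Metric.closedBall 0 1 = U ∪ J ∧
      ContinuousOn H₂ {z : ℂ | 1 ≤ ‖z‖} ∧
      Set.InjOn H₂ {z : ℂ | 1 ≤ ‖z‖} ∧
      DifferentiableOn ℂ H₂ {z : ℂ | 1 < ‖z‖} ∧
      H₂ '' {z : ℂ | 1 < ‖z‖} = V ∧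
      H₂ '' {z : ℂ | 1 ≤ ‖z‖} = V ∪ J ∧
      Filter.Tendsto (fun z : ℂ => ‖H₂ z‖)
        (Filter.comap (fun z : ℂ => ‖z‖) Filter.atTop) Filter.atTop ∧
      ∀ z ∈ S1, H₂ (h z) = H₁ z

/-- `h` is a welding homeomorphism. -/
def IsWeldingHomeo (h : ℂ → ℂ) : Prop := ∃ J : Set ℂ, IsWeldingPair h J

/-- `J'` is the image of `J` under a Möbius transformation (whose pole avoids `J`). -/
def MoebiusEquivCurves (J J' : Set ℂ) : Prop :=
  ∃ p q u v : ℂ, p * v - q * u ≠ 0 ∧ (∀ z ∈ J, u * z + v ≠ 0) ∧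
    J' = (fun z : ℂ => (p * z + q) / (u * z + v)) '' J

/-- The inversion (anti-conformal reflection) in the circle with center `c` and radius `ρ`. -/
noncomputable def circleInv (c : ℂ) (ρ : ℝ) (z : ℂ) : ℂ :=
  c + (ρ : ℂ) ^ 2 / ((starRingEnd ℂ) z - (starRingEnd ℂ) c)

end

section E4Aux

open Complex

lemma E4.expMap_def (x : ℝ) :
    expMap x = Complex.exp (((2 * Real.pi * x : ℝ) : ℂ) * Complex.I) := by
  unfold expMap; congr 1; push_cast; ring

lemma E4.continuous_expMap : Continuous expMap := by
  unfold expMap; fun_prop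

lemma E4.abs_expMap (x : ℝ) : ‖expMap x‖ = 1 := by
  rw [E4.expMap_def]; exact Complex.norm_exp_ofReal_mul_I _

lemma E4.mem_S1 (x : ℝ) : expMap x ∈ S1 := E4.abs_expMap x

lemma E4.expMap_add (x y : ℝ) : expMap (x + y) = expMap x * expMap y := by
  unfold expMap; rw [← Complex.exp_add]; congr 1; push_cast; ring

lemma E4.expMap_ne_zero (x : ℝ) : expMap x ≠ 0 := Complex.exp_ne_zero _

lemma E4.expMap_intCast (k : ℤ) : expMap (k : ℝ) = 1 := by
  unfold expMap
  rw [show (2 * (Real.pi : ℂ) * Complex.I * ((k : ℝ) : ℂ))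
      = (k : ℂ) * (2 * (Real.pi : ℂ) * Complex.I) by push_cast; ring]
  exact Complex.exp_int_mul_two_pi_mul_I k

lemma E4.expMap_add_int (x : ℝ) (k : ℤ) : expMap (x + k) = expMap x := by
  rw [E4.expMap_add, E4.expMap_intCast, mul_one]

lemma E4.expMap_eq_one_iff {t : ℝ} : expMap t = 1 ↔ ∃ k : ℤ, t = k := by
  unfold expMap
  rw [Complex.exp_eq_one_iff]
  constructor
  · rintro ⟨n, hn⟩
    refine ⟨n, ?_⟩
    have h2 : (2 * (Real.pi : ℂ) * Complex.I) ≠ 0 := by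
      apply mul_ne_zero (mul_ne_zero two_ne_zero _) Complex.I_ne_zero
      exact_mod_cast Real.pi_ne_zero
    have h3 : (2 * (Real.pi : ℂ) * Complex.I) * (t : ℂ)
        = (2 * (Real.pi : ℂ) * Complex.I) * (n : ℂ) := by linear_combination hn
    have h4 : (t : ℂ) = (n : ℂ) := mul_left_cancel₀ h2 h3
    exact_mod_cast h4
  · rintro ⟨k, rfl⟩
    exact ⟨k, by push_cast; ring⟩

lemma E4.expMap_eq_iff {u v : ℝ} : expMap u = expMap v ↔ ∃ k : ℤ, u = v + k := by
  constructor
  · intro h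
    have h1 : expMap (u - v) * expMap v = expMap u := by
      rw [← E4.expMap_add]; congr 1; ring
    rw [h] at h1
    have h2 : expMap (u - v) = 1 := by
      have := mul_right_cancel₀ (E4.expMap_ne_zero v) (h1.trans (one_mul (expMap v)).symm)
      exact this
    obtain ⟨k, hk⟩ := E4.expMap_eq_one_iff.mp h2
    exact ⟨k, by linarith⟩
  · rintro ⟨k, rfl⟩
    exact E4.expMap_add_int v k

lemma E4.abs_expMap_sub_one (t : ℝ) :
    ‖expMap t - 1‖ = 2 * |Real.sin (Real.pi * t)| := by
  rw [E4.expMap_def]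
  have hre : (Complex.exp (((2 * Real.pi * t : ℝ) : ℂ) * Complex.I) - 1).re
      = Real.cos (2 * Real.pi * t) - 1 := by
    rw [Complex.sub_re, Complex.exp_ofReal_mul_I_re, Complex.one_re]
  have him : (Complex.exp (((2 * Real.pi * t : ℝ) : ℂ) * Complex.I) - 1).im
      = Real.sin (2 * Real.pi * t) := by
    rw [Complex.sub_im, Complex.exp_ofReal_mul_I_im, Complex.one_im, sub_zero]
  rw [Complex.norm_def, Complex.normSq_apply, hre, him]
  have hcos : Real.cos (2 * Real.pi * t) = 1 - 2 * Real.sin (Real.pi * t) ^ 2 := by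
    have hA := Real.cos_two_mul (Real.pi * t)
    have hB := Real.sin_sq_add_cos_sq (Real.pi * t)
    rw [show 2 * (Real.pi * t) = 2 * Real.pi * t by ring] at hA
    linarith
  have hsin : Real.sin (2 * Real.pi * t)
      = 2 * Real.sin (Real.pi * t) * Real.cos (Real.pi * t) := by
    have := Real.sin_two_mul (Real.pi * t)
    rw [show 2 * (Real.pi * t) = 2 * Real.pi * t by ring] at this
    exact this
  have hkey : (Real.cos (2 * Real.pi * t) - 1) * (Real.cos (2 * Real.pi * t) - 1)
      + Real.sin (2 * Real.pi * t) * Real.sin (2 * Real.pi * t)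
      = (2 * |Real.sin (Real.pi * t)|) ^ 2 := by
    have hB := Real.sin_sq_add_cos_sq (Real.pi * t)
    rw [hcos, hsin]
    rw [mul_pow, _root_.sq_abs]
    nlinarith [hB]
  rw [hkey, Real.sqrt_sq (by positivity)]

lemma E4.abs_expMap_sub (u v : ℝ) :
    ‖expMap u - expMap v‖ = 2 * |Real.sin (Real.pi * (u - v))| := by
  have h1 : expMap u - expMap v = expMap v * (expMap (u - v) - 1) := by
    rw [mul_sub, mul_one, ← E4.expMap_add]
    rw [show v + (u - v) = u by ring]
  rw [h1, norm_mul, E4.abs_expMap, one_mul, E4.abs_expMap_sub_one]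

lemma E4.exists_rep {z : ℂ} (hz : z ∈ S1) : ∃ t : ℝ, z = expMap t := by
  refine ⟨z.arg / (2 * Real.pi), ?_⟩
  have h1 : ‖z‖ = 1 := hz
  have h2 := Complex.norm_mul_exp_arg_mul_I z
  rw [h1] at h2
  rw [E4.expMap_def]
  have h3 : 2 * Real.pi * (z.arg / (2 * Real.pi)) = z.arg := by
    field_simp
  have h4 : ((2 * Real.pi * (z.arg / (2 * Real.pi)) : ℝ) : ℂ) = (z.arg : ℂ) := by
    rw [h3]
  rw [h4]
  rw [Complex.ofReal_one, one_mul] at h2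
  exact h2.symm

lemma E4.iter_lift {f : ℂ → ℂ} {F : ℝ → ℝ} (hlift : ∀ x, f (expMap x) = expMap (F x)) :
    ∀ (n : ℕ) (x : ℝ), f^[n] (expMap x) = expMap (F^[n] x) := by
  intro n
  induction n with
  | zero => intro x; simp
  | succ m ih =>
    intro x
    rw [Function.iterate_succ_apply, Function.iterate_succ_apply, hlift, ih]

lemma E4.lift_shift {F : ℝ → ℝ} {d : ℤ} (hper : ∀ x, F (x + 1) = F x + d) :
    ∀ (k : ℤ) (x : ℝ), F (x + k) = F x + k * d := by
  intro k
  induction k using Int.induction_on with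
  | zero => simp
  | succ n ih =>
    intro x
    have h1 : x + ((n : ℤ) + 1 : ℤ) = (x + (n : ℤ)) + 1 := by push_cast; ring
    rw [h1, hper, ih]
    push_cast; ring
  | pred n ih =>
    intro x
    have h2 := hper (x + (-(n : ℤ) - 1 : ℤ))
    have h3 : x + ((-(n : ℤ) - 1 : ℤ)) + 1 = x + (-(n : ℤ) : ℤ) := by push_cast; ring
    rw [h3, ih] at h2
    have h4 : F (x + ((-(n : ℤ) - 1 : ℤ))) = F x + (-(n : ℤ)) * d - d := by
      push_cast at h2 ⊢; linarith
    rw [h4]; push_cast; ring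

lemma E4.iterate_shift {F : ℝ → ℝ} {d : ℤ} (hper : ∀ x, F (x + 1) = F x + d) :
    ∀ (n : ℕ) (k : ℤ) (x : ℝ), F^[n] (x + k) = F^[n] x + k * d ^ n := by
  intro n
  induction n with
  | zero => intro k x; simp
  | succ m ih =>
    intro k x
    rw [Function.iterate_succ_apply, Function.iterate_succ_apply]
    rw [E4.lift_shift hper k x]
    have h2 := ih (k * d) (F x)
    push_cast at h2 ⊢
    rw [show F x + (k : ℝ) * (d : ℝ) = F x + ((k : ℝ) * (d : ℝ)) by ring]
    rw [h2]; ring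

lemma E4.int_valued_aux {h : ℝ → ℝ} (hc : Continuous h) (hi : ∀ x, ∃ k : ℤ, h x = k)
    {x y : ℝ} (hlt : h x < h y) : False := by
  obtain ⟨kx, hkx⟩ := hi x
  obtain ⟨ky, hky⟩ := hi y
  have hk : kx < ky := by
    have : (kx : ℝ) < (ky : ℝ) := by rw [← hkx, ← hky]; exact hlt
    exact_mod_cast this
  have hk1 : (kx : ℝ) + 1 ≤ (ky : ℝ) := by exact_mod_cast hk
  have hmem : (kx : ℝ) + 1/2 ∈ Set.uIcc (h x) (h y) := by
    rw [Set.mem_uIcc]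
    left
    constructor
    · rw [hkx]; linarith
    · rw [hky]; linarith
  obtain ⟨t, _, ht⟩ := intermediate_value_uIcc hc.continuousOn hmem
  obtain ⟨kt, hkt⟩ := hi t
  rw [hkt] at ht
  have h2 : (2 * kt : ℤ) = 2 * kx + 1 := by
    have : ((2 * kt : ℤ) : ℝ) = ((2 * kx + 1 : ℤ) : ℝ) := by push_cast; linarith
    exact_mod_cast this
  omega

lemma E4.int_valued_const {h : ℝ → ℝ} (hc : Continuous h) (hi : ∀ x, ∃ k : ℤ, h x = k)
    (x y : ℝ) : h x = h y := by
  rcases lt_trichotomy (h x) (h y) with h' | h' | h'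
  · exact absurd (E4.int_valued_aux hc hi h') (fun t => t)
  · exact h'
  · exact absurd (E4.int_valued_aux hc hi h') (fun t => t)

lemma E4.close_pair {Q : ℝ → ℝ} (hQ : Continuous Q) {e : ℤ} (he : 1 ≤ e)
    (hper : ∀ x, Q (x + 1) = Q x + e) {ε : ℝ} (hε : 0 < ε) (hε1 : ε ≤ 1)
    (hnm : ¬ StrictMono Q) :
    ∃ u v : ℝ, u < v ∧ v - u < ε ∧ Q u = Q v := by
  rw [StrictMono] at hnm
  push_neg at hnm
  obtain ⟨x, y, hxy, hQxy⟩ := hnm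
  have hyx : 0 < y - x := by linarith
  -- find a close descending pair
  obtain ⟨p, h, hh0, hhε, hQdesc⟩ :
      ∃ p h : ℝ, 0 < h ∧ h < ε / 4 ∧ Q (p + h) ≤ Q p := by
    obtain ⟨N, hN⟩ := exists_nat_gt ((y - x) * 4 / ε)
    have hN0 : 0 < N := by
      have h0 : (0 : ℝ) < (y - x) * 4 / ε := by positivity
      have : (0 : ℝ) < (N : ℝ) := lt_trans h0 hN
      exact_mod_cast this
    have hN0' : (0 : ℝ) < (N : ℝ) := by exact_mod_cast hN0
    set h := (y - x) / N with hhdef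
    have hh0 : 0 < h := by positivity
    have hhε : h < ε / 4 := by
      rw [hhdef, div_lt_div_iff₀ hN0' (by norm_num : (0:ℝ) < 4)]
      have : (y - x) * 4 < N * ε := by
        rw [div_lt_iff₀ hε] at hN
        linarith
      linarith
    by_cases hcase : ∃ i : ℕ, i < N ∧ Q (x + (i + 1) * h) ≤ Q (x + i * h)
    · obtain ⟨i, _, hdesc⟩ := hcase
      refine ⟨x + i * h, h, hh0, hhε, ?_⟩
      rw [show x + (i:ℝ) * h + h = x + ((i:ℝ) + 1) * h by ring] at *
      exact hdesc
    · exfalso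
      push_neg at hcase
      have key : ∀ j : ℕ, j ≤ N → 1 ≤ j → Q x < Q (x + j * h) := by
        intro j
        induction j with
        | zero => intro _ h1; omega
        | succ m ih =>
          intro hm _
          have hmN : m < N := by omega
          have hstep := hcase m hmN
          rcases Nat.eq_zero_or_pos m with hm0 | hm1
          · subst hm0
            push_cast at hstep ⊢
            simpa using hstep
          · have h1 := ih (by omega) hm1
            push_cast at hstep ⊢
            exact lt_trans h1 hstep
      have hNy : x + (N : ℝ) * h = y := by
        rw [hhdef]
        field_simp
        ring
      have := key N le_rfl hN0
      rw [hNy] at this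
      linarith
  set r := p + h with hrdef
  obtain ⟨m, hmIcc, hmin⟩ := isCompact_Icc.exists_isMinOn
    (Set.nonempty_Icc.mpr (by linarith : p ≤ p + 1)) hQ.continuousOn
  have hmin' : ∀ t ∈ Set.Icc p (p + 1), Q m ≤ Q t := fun t ht => hmin ht
  have hrIcc : r ∈ Set.Icc p (p + 1) := ⟨by linarith, by linarith⟩
  have hQp1 : Q p < Q (p + 1) := by
    rw [hper]
    have : (1 : ℝ) ≤ (e : ℝ) := by exact_mod_cast he
    linarith
  have hmp1 : m < p + 1 := by
    rcases lt_or_eq_of_le hmIcc.2 with h' | h'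
    · exact h'
    · exfalso
      have h1 := hmin' r hrIcc
      rw [h'] at h1
      linarith
  rcases eq_or_lt_of_le hmIcc.1 with hmp | hmp
  · -- m = p
    have h1 := hmin' r hrIcc
    rw [← hmp] at h1
    exact ⟨p, r, by linarith, by rw [hrdef]; linarith, le_antisymm h1 hQdesc⟩
  · set ρ := min (ε / 8) (min ((m - p) / 2) ((p + 1 - m) / 2)) with hρdef
    have hρ0 : 0 < ρ := by
      apply lt_min (by linarith)
      apply lt_min <;> linarith
    have hρ1 : ρ ≤ ε / 8 := min_le_left _ _
    have hρ2 : ρ ≤ (m - p) / 2 := le_trans (min_le_right _ _) (min_le_left _ _)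
    have hρ3 : ρ ≤ (p + 1 - m) / 2 := le_trans (min_le_right _ _) (min_le_right _ _)
    have hmem1 : m - ρ ∈ Set.Icc p (p + 1) := ⟨by linarith, by linarith⟩
    have hmem2 : m + ρ ∈ Set.Icc p (p + 1) := ⟨by linarith, by linarith⟩
    have hA := hmin' _ hmem1
    have hB := hmin' _ hmem2
    rcases eq_or_lt_of_le hA with hA' | hA'
    · exact ⟨m - ρ, m, by linarith, by linarith, hA'.symm⟩
    · rcases eq_or_lt_of_le hB with hB' | hB'
      · exact ⟨m, m + ρ, by linarith, by linarith, hB'⟩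
      · set v := min (Q (m - ρ)) (Q (m + ρ)) with hvdef
        have hv1 : Q m < v := lt_min hA' hB'
        have hsub1 := intermediate_value_Icc' (by linarith : m - ρ ≤ m)
          (hQ.continuousOn (s := Set.Icc (m - ρ) m))
        obtain ⟨u, huI, hQu⟩ := hsub1 ⟨le_of_lt hv1, min_le_left _ _⟩
        have hsub2 := intermediate_value_Icc (by linarith : m ≤ m + ρ)
          (hQ.continuousOn (s := Set.Icc m (m + ρ)))
        obtain ⟨w, hwI, hQw⟩ := hsub2 ⟨le_of_lt hv1, min_le_right _ _⟩
        have huw : u < w := by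
          rcases lt_or_eq_of_le (le_trans huI.2 hwI.1) with h' | h'
          · exact h'
          · exfalso
            have hum : u = m := le_antisymm huI.2 (h' ▸ hwI.1)
            rw [hum] at hQu
            rw [hQu] at hv1
            exact lt_irrefl _ hv1
        refine ⟨u, w, huw, ?_, by rw [hQu, hQw]⟩
        have h1 := huI.1
        have h2 := hwI.2
        linarith

end E4Aux

section E4Aux2

lemma E4.no_close_equal {f : ℂ → ℂ} {F : ℝ → ℝ}
    (hlift : ∀ x, f (expMap x) = expMap (F x)) {δ : ℝ} (hδ : 0 < δ)
    (hE : ∀ a ∈ S1, ∀ b ∈ S1, a ≠ b → ∃ n : ℕ, δ < ‖f^[n] a - f^[n] b‖)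
    {u v : ℝ} (huv : u < v) (h1 : v - u < 1/2) (h2 : v - u < δ / 7) : F u ≠ F v := by
  intro hFeq
  have hne : expMap u ≠ expMap v := by
    intro h
    obtain ⟨k, hk⟩ := E4.expMap_eq_iff.mp h
    have hb1 : (-1 : ℝ) < (k : ℝ) := by linarith
    have hb2 : (k : ℝ) < 0 := by linarith
    have hk1 : (-1 : ℤ) < k := by exact_mod_cast hb1
    have hk2 : k < 0 := by exact_mod_cast hb2
    omega
  obtain ⟨n, hn⟩ := hE (expMap u) (E4.mem_S1 u) (expMap v) (E4.mem_S1 v) hne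
  cases n with
  | zero =>
    simp only [Function.iterate_zero, id_eq] at hn
    rw [E4.abs_expMap_sub] at hn
    have hs1 : |Real.sin (Real.pi * (u - v))| = Real.sin (Real.pi * (v - u)) := by
      rw [show Real.pi * (u - v) = -(Real.pi * (v - u)) by ring, Real.sin_neg, abs_neg,
        abs_of_nonneg]
      exact Real.sin_nonneg_of_nonneg_of_le_pi
        (le_of_lt (mul_pos Real.pi_pos (by linarith)))
        (by nlinarith [Real.pi_pos])
    rw [hs1] at hn
    have hlt : Real.sin (Real.pi * (v - u)) < Real.pi * (v - u) :=
      Real.sin_lt (mul_pos Real.pi_pos (by linarith))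
    have hπ : Real.pi < 3.15 := Real.pi_lt_d2
    nlinarith [Real.pi_pos]
  | succ m =>
    have heq : f^[m + 1] (expMap u) = f^[m + 1] (expMap v) := by
      rw [Function.iterate_succ_apply, Function.iterate_succ_apply, hlift, hlift, hFeq]
    rw [heq, sub_self] at hn
    simp at hn
    linarith

lemma E4.strictMono_lift {f : ℂ → ℂ} {F : ℝ → ℝ} (hFc : Continuous F)
    (hlift : ∀ x, f (expMap x) = expMap (F x)) {e : ℤ}
    (hper : ∀ x, F (x + 1) = F x + e) (he : 1 ≤ e) (hexp : ExpansiveOn f) :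
    StrictMono F := by
  obtain ⟨δ, hδ, hE⟩ := hexp
  by_contra hnm
  obtain ⟨u, v, huv, hgap, hQeq⟩ := E4.close_pair hFc he hper
    (ε := min (1/2) (δ / 7)) (lt_min one_half_pos (by positivity))
    (le_trans (min_le_left _ _) (by norm_num)) hnm
  exact E4.no_close_equal hlift hδ hE huv
    (lt_of_lt_of_le hgap (min_le_left _ _))
    (lt_of_lt_of_le hgap (min_le_right _ _)) hQeq

lemma E4.strictAnti_lift {f : ℂ → ℂ} {F : ℝ → ℝ} (hFc : Continuous F)
    (hlift : ∀ x, f (expMap x) = expMap (F x)) {e : ℤ}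
    (hper : ∀ x, F (x + 1) = F x + e) (he : e ≤ -1) (hexp : ExpansiveOn f) :
    StrictAnti F := by
  obtain ⟨δ, hδ, hE⟩ := hexp
  by_contra hna
  set G : ℝ → ℝ := fun x => F (-x) with hGdef
  have hGper : ∀ x, G (x + 1) = G x + ((-e : ℤ) : ℝ) := by
    intro x
    have h1 := hper (-x - 1)
    have h2 : -x - 1 + 1 = -x := by ring
    rw [h2] at h1
    simp only [hGdef]
    rw [show -(x + 1) = -x - 1 by ring]
    push_cast
    linarith
  have hGnm : ¬ StrictMono G := by
    intro hm
    apply hna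
    intro x y hxy
    have := hm (neg_lt_neg hxy)
    simpa [hGdef] using this
  obtain ⟨u, v, huv, hgap, hQeq⟩ := E4.close_pair (hFc.comp continuous_neg)
    (e := -e) (by omega) hGper
    (ε := min (1/2) (δ / 7)) (lt_min one_half_pos (by positivity))
    (le_trans (min_le_left _ _) (by norm_num)) hGnm
  have hQeq' : F (-v) = F (-u) := hQeq.symm
  exact E4.no_close_equal hlift hδ hE (neg_lt_neg huv)
    (by rw [show -u - -v = v - u by ring]; exact lt_of_lt_of_le hgap (min_le_left _ _))
    (by rw [show -u - -v = v - u by ring]; exact lt_of_lt_of_le hgap (min_le_right _ _))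
    hQeq'

lemma E4.iterate_strictMono_of_anti_even {F : ℝ → ℝ} (hF : StrictAnti F) {q : ℕ}
    (hq : Even q) : StrictMono (F^[q]) := by
  have key : ∀ n : ℕ, StrictMono (F^[n]) ∨ StrictAnti (F^[n]) := by
    intro n
    induction n with
    | zero => left; simpa using strictMono_id
    | succ m ih =>
      rw [Function.iterate_succ']
      rcases ih with h | h
      · right; exact hF.comp_strictMono h
      · left; exact hF.comp h
  obtain ⟨k, hk⟩ := hq
  rw [hk, Function.iterate_add]
  rcases key k with h | h
  · exact h.comp h
  · exact h.comp h

end E4Aux2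

set_option maxHeartbeats 1000000

/-- **Property (E4).** For an expansive circle covering `f` and a periodic point `a`
with first orientation-preserving return map `f^[q]`, the one-sided multipliers
`λ(a⁺)` and `λ(a⁻)`, whenever they exist, are at least `1`. -/
theorem multiplier_ge_one_of_expansive
    (f : ℂ → ℂ) (d : ℤ) (hd : d ≠ 0) (hcov : IsCircleCovering f d)
    (hexp : ExpansiveOn f)
    (a : ℂ) (ha : a ∈ S1) (q : ℕ) (hq : OPPeriod f a q) :
    (∀ lam : ℝ, HasMultiplierPlus f a q lam → 1 ≤ lam) ∧
    (∀ lam : ℝ, HasMultiplierMinus f a q lam → 1 ≤ lam) := by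
  obtain ⟨F, hFc, hFlift, hFper⟩ := hcov
  obtain ⟨hq0, hfix, ⟨e, he0, G, hGc, hGlift, hGper⟩, -⟩ := hq
  have hQlift : ∀ x, f^[q] (expMap x) = expMap (F^[q] x) :=
    fun x => E4.iter_lift hFlift q x
  -- the degree of `f^[q]` is `d ^ q`
  have hedq : e = d ^ q := by
    have hint : ∀ x : ℝ, ∃ k : ℤ, G x - F^[q] x = k := by
      intro x
      have h1 : expMap (G x) = expMap (F^[q] x) := by rw [← hGlift, ← hQlift]
      obtain ⟨k, hk⟩ := E4.expMap_eq_iff.mp h1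
      exact ⟨k, by linarith⟩
    have hconst := E4.int_valued_const (hGc.sub (hFc.iterate q)) hint 1 0
    have hG1 : G 1 = G 0 + (e : ℝ) := by
      have := hGper 0; rw [zero_add] at this; exact this
    have hQ1 : F^[q] 1 = F^[q] 0 + ((d ^ q : ℤ) : ℝ) := by
      have := E4.iterate_shift hFper q 1 0
      push_cast at this ⊢
      rw [zero_add] at this
      linarith [this]
    have : (e : ℝ) = ((d ^ q : ℤ) : ℝ) := by
      rw [Pi.sub_apply, Pi.sub_apply, hG1, hQ1] at hconst
      linarith
    exact_mod_cast this
  have hdq : (0 : ℤ) < d ^ q := hedq ▸ he0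
  -- `F^[q]` is strictly monotone (increasing)
  have hQm : StrictMono (F^[q]) := by
    rcases lt_trichotomy d 0 with hdneg | hd0 | hdpos
    · have hFa : StrictAnti F := E4.strictAnti_lift hFc hFlift hFper (by omega) hexp
      have hqeven : Even q := by
        rcases Nat.even_or_odd q with h | h
        · exact h
        · exact absurd (Odd.pow_neg h hdneg) (by omega)
      exact E4.iterate_strictMono_of_anti_even hFa hqeven
    · exact absurd hd0 hd
    · have hFm : StrictMono F := E4.strictMono_lift hFc hFlift hFper (by omega) hexp
      exact hFm.iterate q
  -- normalize the lift of `f^[q]` so that it fixes `s`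
  obtain ⟨s, hs⟩ := E4.exists_rep ha
  have hfixE : expMap (F^[q] s) = expMap s := by
    rw [← hQlift, ← hs, hfix, hs]
  obtain ⟨k₀, hk₀⟩ := E4.expMap_eq_iff.mp hfixE
  obtain ⟨Q', hQ'def⟩ : ∃ g : ℝ → ℝ, g = fun x => F^[q] x - (k₀ : ℝ) := ⟨_, rfl⟩
  have hQ'm : StrictMono Q' := fun x y hxy => by
    simp only [hQ'def]
    exact sub_lt_sub_right (hQm hxy) _
  have hQ'c : Continuous Q' := by
    rw [hQ'def]; exact (hFc.iterate q).sub continuous_const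
  have hQ's : Q' s = s := by simp only [hQ'def]; rw [hk₀]; ring
  have hQ'lift : ∀ t, f^[q] (expMap t) = expMap (Q' t) := by
    intro t
    rw [hQlift]
    rw [show F^[q] t = Q' t + (k₀ : ℝ) by simp only [hQ'def]; ring]
    exact E4.expMap_add_int _ k₀
  obtain ⟨δ, hδ, hEδ⟩ := hexp
  -- continuity radii for the intermediate iterates
  have hCq : ∀ J : ℕ, ∃ ρ : ℝ, 0 < ρ ∧ ∀ j < J, ∀ u : ℝ, |u - s| < ρ →
      ‖expMap (F^[j] u) - expMap (F^[j] s)‖ < δ := by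
    intro J
    induction J with
    | zero => exact ⟨1, one_pos, fun j hj => absurd hj (Nat.not_lt_zero j)⟩
    | succ m ih =>
      obtain ⟨ρ₁, hρ₁, h1⟩ := ih
      have hcont : ContinuousAt (fun u : ℝ => expMap (F^[m] u)) s :=
        (E4.continuous_expMap.comp (hFc.iterate m)).continuousAt
      obtain ⟨ρ₂, hρ₂, h2⟩ := Metric.continuousAt_iff.mp hcont δ hδ
      refine ⟨min ρ₁ ρ₂, lt_min hρ₁ hρ₂, ?_⟩
      intro j hj u hu
      rcases Nat.lt_succ_iff_lt_or_eq.mp hj with hj' | hj'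
      · exact h1 j hj' u (lt_of_lt_of_le hu (min_le_left _ _))
      · subst hj'
        have h3 : dist u s < ρ₂ := by
          rw [Real.dist_eq]; exact lt_of_lt_of_le hu (min_le_right _ _)
        have h4 := h2 h3
        rw [Complex.dist_eq] at h4
        exact h4
  obtain ⟨ρ, hρ0, hρ⟩ := hCq q
  -- iterates of `f^[q]` in terms of `Q'`
  have hQ'iter : ∀ (k : ℕ) (t : ℝ), (f^[q])^[k] (expMap t) = expMap (Q'^[k] t) := by
    intro k
    induction k with
    | zero => intro t; simp
    | succ m ih =>
      intro t
      rw [Function.iterate_succ_apply', Function.iterate_succ_apply', ih, hQ'lift]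
  -- the final contradiction with expansivity
  have hfinal : ∀ y : ℝ, expMap y ≠ expMap s → (∀ k : ℕ, |Q'^[k] y - s| < ρ) → False := by
    intro y hne hk
    obtain ⟨n, hn⟩ := hEδ a ha (expMap y) (E4.mem_S1 y)
      (by rw [hs]; exact hne.symm)
    have hjq : n % q < q := Nat.mod_lt _ hq0
    have hsplit : n % q + q * (n / q) = n := Nat.mod_add_div n q
    have h1 : f^[n] (expMap y) = expMap (F^[n % q] (Q'^[n / q] y)) := by
      conv_lhs => rw [← hsplit]
      rw [Function.iterate_add_apply, Function.iterate_mul, hQ'iter,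
        E4.iter_lift hFlift]
    have h2 : f^[n] a = expMap (F^[n % q] s) := by
      conv_lhs => rw [← hsplit]
      rw [Function.iterate_add_apply, Function.iterate_mul,
        Function.iterate_fixed hfix, hs, E4.iter_lift hFlift]
    rw [h1, h2] at hn
    have h3 := hρ (n % q) hjq (Q'^[n / q] y) (hk (n / q))
    rw [norm_sub_rev] at hn
    linarith
  constructor
  · -- the `λ(a⁺)` case
    rintro lam ⟨hlam0, z₀, hz₀S1, hz₀ne, htends⟩
    by_contra hlt
    push_neg at hlt
    obtain ⟨κ, hκdef⟩ : ∃ r : ℝ, r = (1 + lam) / 2 := ⟨_, rfl⟩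
    have hκ1 : κ < 1 := by rw [hκdef]; linarith
    have hκlam : lam < κ := by rw [hκdef]; linarith
    have habs : Filter.Tendsto (fun z : ℂ => ‖(f^[q] z - a) / (z - a)‖)
        (nhdsWithin a (openArc a z₀)) (nhds lam) := by
      have h1 := (continuous_norm.tendsto ((lam : ℝ) : ℂ)).comp htends
      rw [Complex.norm_real, Real.norm_eq_abs, abs_of_nonneg hlam0] at h1
      exact h1
    have hev : ∀ᶠ z in nhdsWithin a (openArc a z₀),
        ‖(f^[q] z - a) / (z - a)‖ < κ := habs.eventually_lt_const hκlam
    obtain ⟨t₀, ht₀⟩ := E4.exists_rep hz₀S1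
    obtain ⟨c₀, hc₀def⟩ : ∃ r : ℝ, r = Int.fract (t₀ - s) := ⟨_, rfl⟩
    have hc₀lt : c₀ < 1 := by rw [hc₀def]; exact Int.fract_lt_one _
    have hfr : c₀ = t₀ - s - (⌊t₀ - s⌋ : ℝ) := by
      rw [hc₀def, ← Int.self_sub_floor]
    have hc₀pos : 0 < c₀ := by
      rw [hc₀def]
      rcases lt_or_eq_of_le (Int.fract_nonneg (t₀ - s)) with h' | h'
      · exact h'
      · exfalso
        apply hz₀ne
        rw [ht₀, hs]
        apply E4.expMap_eq_iff.mpr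
        have h0 : c₀ = 0 := by rw [hc₀def]; exact h'.symm
        exact ⟨⌊t₀ - s⌋, by linarith [hfr, h0]⟩
    have hz₀rep : z₀ = expMap (s + c₀) := by
      rw [ht₀]
      symm
      apply E4.expMap_eq_iff.mpr
      exact ⟨-⌊t₀ - s⌋, by push_cast; linarith⟩
    have harc : ∀ x : ℝ, x ∈ Set.Ioo s (s + c₀) → expMap x ∈ openArc a z₀ := by
      intro x hx
      exact ⟨s, x, s + c₀, hs, rfl, hz₀rep, hx.1, hx.2, by linarith⟩
    have htE : Filter.Tendsto expMap (nhdsWithin s (Set.Ioo s (s + c₀)))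
        (nhdsWithin a (openArc a z₀)) := by
      rw [tendsto_nhdsWithin_iff]
      constructor
      · have h1 : Filter.Tendsto expMap (nhds s) (nhds (expMap s)) :=
          E4.continuous_expMap.continuousAt
        rw [← hs] at h1
        exact h1.mono_left nhdsWithin_le_nhds
      · exact eventually_mem_nhdsWithin.mono (fun x hx => harc x hx)
    have hev2 := htE.eventually hev
    obtain ⟨U, hUo, hsU, hUsub⟩ := mem_nhdsWithin.mp hev2
    obtain ⟨τ₁, hτ₁, hball⟩ := Metric.isOpen_iff.mp hUo s hsU
    obtain ⟨τ₃, hτ₃, hhalf⟩ := Metric.continuousAt_iff.mp hQ'c.continuousAt (1/2) one_half_pos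
    obtain ⟨τ, hτdef⟩ : ∃ r : ℝ, r = min (min τ₁ τ₃) (min c₀ (min ρ (1/2))) := ⟨_, rfl⟩
    have hτ0 : 0 < τ := by
      rw [hτdef]; exact lt_min (lt_min hτ₁ hτ₃) (lt_min hc₀pos (lt_min hρ0 one_half_pos))
    have hττ₁ : τ ≤ τ₁ := by
      rw [hτdef]; exact le_trans (min_le_left _ _) (min_le_left _ _)
    have hττ₃ : τ ≤ τ₃ := by
      rw [hτdef]; exact le_trans (min_le_left _ _) (min_le_right _ _)
    have hτc₀ : τ ≤ c₀ := by
      rw [hτdef]; exact le_trans (min_le_right _ _) (min_le_left _ _)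
    have hτρ : τ ≤ ρ := by
      rw [hτdef]; exact le_trans (min_le_right _ _) (le_trans (min_le_right _ _) (min_le_left _ _))
    have hτh : τ ≤ 1/2 := by
      rw [hτdef]; exact le_trans (min_le_right _ _) (le_trans (min_le_right _ _) (min_le_right _ _))
    obtain ⟨x, hxdef⟩ : ∃ r : ℝ, r = s + τ / 2 := ⟨_, rfl⟩
    have hstep : ∀ w : ℝ, s < w → w ≤ x → s < Q' w ∧ Q' w < w := by
      intro w hw1 hw2
      have hws : w - s ≤ τ / 2 := by rw [hxdef] at hw2; linarith
      have hwc₀ : w < s + c₀ := by linarith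
      have hwball : w ∈ Metric.ball s τ₁ := by
        rw [Metric.mem_ball, Real.dist_eq, abs_of_pos (by linarith : 0 < w - s)]
        linarith
      have habsw := hUsub ⟨hball hwball, hw1, hwc₀⟩
      have hden_ne : expMap w - a ≠ 0 := by
        rw [hs, sub_ne_zero]
        intro hco
        obtain ⟨k, hk⟩ := E4.expMap_eq_iff.mp hco
        have hb1 : (0 : ℝ) < (k : ℝ) := by linarith
        have hb2 : (k : ℝ) < 1 := by linarith
        have hk1 : (0 : ℤ) < k := by exact_mod_cast hb1
        have hk2 : k < 1 := by exact_mod_cast hb2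
        omega
      have habs2 : ‖f^[q] (expMap w) - a‖ < κ * ‖expMap w - a‖ := by
        rw [Set.mem_setOf_eq, norm_div] at habsw
        have hpos : 0 < ‖expMap w - a‖ := norm_pos_iff.mpr hden_ne
        exact (div_lt_iff₀ hpos).mp habsw
      rw [hQ'lift, hs, E4.abs_expMap_sub, E4.abs_expMap_sub] at habs2
      have hw3 : dist w s < τ₃ := by
        rw [Real.dist_eq, abs_of_pos (by linarith : 0 < w - s)]
        linarith
      have hhalfw : |Q' w - s| < 1/2 := by
        have := hhalf hw3
        rw [Real.dist_eq, hQ's] at this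
        exact this
      have hp0 : 0 < Q' w - s := by
        have := hQ'm hw1
        rw [hQ's] at this
        linarith
      have hphalf : Q' w - s < 1/2 := lt_of_abs_lt hhalfw
      have ht0 : 0 < w - s := by linarith
      have hthalf : w - s ≤ 1/2 := by linarith
      have hb1 : Real.pi * (Q' w - s) ≤ Real.pi / 2 := by
        have := mul_le_mul_of_nonneg_left (le_of_lt hphalf) Real.pi_pos.le
        linarith
      have hb1' : 0 ≤ Real.pi * (Q' w - s) := le_of_lt (mul_pos Real.pi_pos hp0)
      have hb2 : Real.pi * (w - s) ≤ Real.pi / 2 := by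
        have := mul_le_mul_of_nonneg_left hthalf Real.pi_pos.le
        linarith
      have hb2' : 0 < Real.pi * (w - s) := mul_pos Real.pi_pos ht0
      have hsin1 : |Real.sin (Real.pi * (Q' w - s))| = Real.sin (Real.pi * (Q' w - s)) :=
        abs_of_nonneg (Real.sin_nonneg_of_nonneg_of_le_pi hb1'
          (by linarith [Real.pi_pos]))
      have hsin2 : |Real.sin (Real.pi * (w - s))| = Real.sin (Real.pi * (w - s)) :=
        abs_of_nonneg (Real.sin_nonneg_of_nonneg_of_le_pi (le_of_lt hb2')
          (by linarith [Real.pi_pos]))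
      rw [hsin1, hsin2] at habs2
      have hsintpos : 0 < Real.sin (Real.pi * (w - s)) :=
        Real.sin_pos_of_pos_of_lt_pi hb2' (by linarith [Real.pi_pos])
      have hltsin : Real.sin (Real.pi * (Q' w - s)) < Real.sin (Real.pi * (w - s)) := by
        nlinarith [hsintpos, hκ1]
      have hPT : Q' w - s < w - s := by
        by_contra hge
        push_neg at hge
        have hm1 : Real.pi * (w - s) ∈ Set.Icc (-(Real.pi/2)) (Real.pi/2) :=
          ⟨by linarith [Real.pi_pos], hb2⟩
        have hm2 : Real.pi * (Q' w - s) ∈ Set.Icc (-(Real.pi/2)) (Real.pi/2) :=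
          ⟨by linarith [Real.pi_pos], hb1⟩
        have := Real.strictMonoOn_sin.monotoneOn hm1 hm2
          (mul_le_mul_of_nonneg_left hge Real.pi_pos.le)
        linarith
      exact ⟨by linarith, by linarith⟩
    have hiter : ∀ k : ℕ, s < Q'^[k] x ∧ Q'^[k] x ≤ x := by
      intro k
      induction k with
      | zero =>
        refine ⟨?_, le_refl _⟩
        simp only [Function.iterate_zero_apply]
        rw [hxdef]
        linarith
      | succ m ih =>
        rw [Function.iterate_succ_apply']
        obtain ⟨h1, h2⟩ := ih
        obtain ⟨h3, h4⟩ := hstep _ h1 h2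
        exact ⟨h3, le_trans h4.le h2⟩
    apply hfinal x
    · intro hco
      obtain ⟨k, hk⟩ := E4.expMap_eq_iff.mp hco
      have hb1 : (0 : ℝ) < (k : ℝ) := by rw [hxdef] at hk; linarith
      have hb2 : (k : ℝ) < 1 := by rw [hxdef] at hk; linarith
      have hk1 : (0 : ℤ) < k := by exact_mod_cast hb1
      have hk2 : k < 1 := by exact_mod_cast hb2
      omega
    · intro k
      obtain ⟨h1, h2⟩ := hiter k
      rw [abs_of_pos (by linarith : 0 < Q'^[k] x - s)]
      have hxs : x - s = τ / 2 := by rw [hxdef]; ring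
      linarith
  · -- the `λ(a⁻)` case
    rintro lam ⟨hlam0, z₀, hz₀S1, hz₀ne, htends⟩
    by_contra hlt
    push_neg at hlt
    obtain ⟨κ, hκdef⟩ : ∃ r : ℝ, r = (1 + lam) / 2 := ⟨_, rfl⟩
    have hκ1 : κ < 1 := by rw [hκdef]; linarith
    have hκlam : lam < κ := by rw [hκdef]; linarith
    have habs : Filter.Tendsto (fun z : ℂ => ‖(f^[q] z - a) / (z - a)‖)
        (nhdsWithin a (openArc z₀ a)) (nhds lam) := by
      have h1 := (continuous_norm.tendsto ((lam : ℝ) : ℂ)).comp htends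
      rw [Complex.norm_real, Real.norm_eq_abs, abs_of_nonneg hlam0] at h1
      exact h1
    have hev : ∀ᶠ z in nhdsWithin a (openArc z₀ a),
        ‖(f^[q] z - a) / (z - a)‖ < κ := habs.eventually_lt_const hκlam
    obtain ⟨t₀, ht₀⟩ := E4.exists_rep hz₀S1
    obtain ⟨c₀, hc₀def⟩ : ∃ r : ℝ, r = Int.fract (t₀ - s) := ⟨_, rfl⟩
    have hc₀lt : c₀ < 1 := by rw [hc₀def]; exact Int.fract_lt_one _
    have hfr : c₀ = t₀ - s - (⌊t₀ - s⌋ : ℝ) := by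
      rw [hc₀def, ← Int.self_sub_floor]
    have hc₀pos : 0 < c₀ := by
      rw [hc₀def]
      rcases lt_or_eq_of_le (Int.fract_nonneg (t₀ - s)) with h' | h'
      · exact h'
      · exfalso
        apply hz₀ne
        rw [ht₀, hs]
        apply E4.expMap_eq_iff.mpr
        have h0 : c₀ = 0 := by rw [hc₀def]; exact h'.symm
        exact ⟨⌊t₀ - s⌋, by linarith [hfr, h0]⟩
    obtain ⟨u₀, hu₀def⟩ : ∃ r : ℝ, r = s + c₀ - 1 := ⟨_, rfl⟩
    have hz₀rep : z₀ = expMap u₀ := by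
      rw [ht₀]
      symm
      apply E4.expMap_eq_iff.mpr
      exact ⟨-⌊t₀ - s⌋ - 1, by push_cast; rw [hu₀def]; linarith⟩
    have harc : ∀ x : ℝ, x ∈ Set.Ioo u₀ s → expMap x ∈ openArc z₀ a := by
      intro x hx
      exact ⟨u₀, x, s, hz₀rep, rfl, hs, hx.1, hx.2, by rw [hu₀def]; linarith⟩
    have htE : Filter.Tendsto expMap (nhdsWithin s (Set.Ioo u₀ s))
        (nhdsWithin a (openArc z₀ a)) := by
      rw [tendsto_nhdsWithin_iff]
      constructor
      · have h1 : Filter.Tendsto expMap (nhds s) (nhds (expMap s)) :=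
          E4.continuous_expMap.continuousAt
        rw [← hs] at h1
        exact h1.mono_left nhdsWithin_le_nhds
      · exact eventually_mem_nhdsWithin.mono (fun x hx => harc x hx)
    have hev2 := htE.eventually hev
    obtain ⟨U, hUo, hsU, hUsub⟩ := mem_nhdsWithin.mp hev2
    obtain ⟨τ₁, hτ₁, hball⟩ := Metric.isOpen_iff.mp hUo s hsU
    obtain ⟨τ₃, hτ₃, hhalf⟩ := Metric.continuousAt_iff.mp hQ'c.continuousAt (1/2) one_half_pos
    obtain ⟨τ, hτdef⟩ : ∃ r : ℝ, r = min (min τ₁ τ₃) (min (s - u₀) (min ρ (1/2))) := ⟨_, rfl⟩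
    have hw₀ : s - u₀ = 1 - c₀ := by rw [hu₀def]; ring
    have hτ0 : 0 < τ := by
      rw [hτdef]
      apply lt_min (lt_min hτ₁ hτ₃)
      apply lt_min
      · linarith
      · exact lt_min hρ0 one_half_pos
    have hττ₁ : τ ≤ τ₁ := by
      rw [hτdef]; exact le_trans (min_le_left _ _) (min_le_left _ _)
    have hττ₃ : τ ≤ τ₃ := by
      rw [hτdef]; exact le_trans (min_le_left _ _) (min_le_right _ _)
    have hτw₀ : τ / 2 < s - u₀ := by
      have h1 : τ ≤ s - u₀ := by
        rw [hτdef]; exact le_trans (min_le_right _ _) (min_le_left _ _)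
      linarith
    have hτρ : τ ≤ ρ := by
      rw [hτdef]; exact le_trans (min_le_right _ _) (le_trans (min_le_right _ _) (min_le_left _ _))
    have hτh : τ ≤ 1/2 := by
      rw [hτdef]; exact le_trans (min_le_right _ _) (le_trans (min_le_right _ _) (min_le_right _ _))
    obtain ⟨x, hxdef⟩ : ∃ r : ℝ, r = s - τ / 2 := ⟨_, rfl⟩
    have hstep : ∀ w : ℝ, x ≤ w → w < s → w < Q' w ∧ Q' w < s := by
      intro w hw1 hw2
      have hws : s - w ≤ τ / 2 := by rw [hxdef] at hw1; linarith
      have hwu₀ : u₀ < w := by linarith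
      have hwball : w ∈ Metric.ball s τ₁ := by
        rw [Metric.mem_ball, Real.dist_eq, abs_of_neg (by linarith : w - s < 0)]
        linarith
      have habsw := hUsub ⟨hball hwball, hwu₀, hw2⟩
      have hden_ne : expMap w - a ≠ 0 := by
        rw [hs, sub_ne_zero]
        intro hco
        obtain ⟨k, hk⟩ := E4.expMap_eq_iff.mp hco
        have hb1 : (-1 : ℝ) < (k : ℝ) := by linarith
        have hb2 : (k : ℝ) < 0 := by linarith
        have hk1 : (-1 : ℤ) < k := by exact_mod_cast hb1
        have hk2 : k < 0 := by exact_mod_cast hb2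
        omega
      have habs2 : ‖f^[q] (expMap w) - a‖ < κ * ‖expMap w - a‖ := by
        rw [Set.mem_setOf_eq, norm_div] at habsw
        have hpos : 0 < ‖expMap w - a‖ := norm_pos_iff.mpr hden_ne
        exact (div_lt_iff₀ hpos).mp habsw
      rw [hQ'lift, hs, E4.abs_expMap_sub, E4.abs_expMap_sub] at habs2
      have hw3 : dist w s < τ₃ := by
        rw [Real.dist_eq, abs_of_neg (by linarith : w - s < 0)]
        linarith
      have hhalfw : |Q' w - s| < 1/2 := by
        have := hhalf hw3
        rw [Real.dist_eq, hQ's] at this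
        exact this
      have hp0 : 0 < s - Q' w := by
        have := hQ'm hw2
        rw [hQ's] at this
        linarith
      have hphalf : s - Q' w < 1/2 := by
        have := neg_lt_of_abs_lt hhalfw
        linarith
      have ht0 : 0 < s - w := by linarith
      have hthalf : s - w ≤ 1/2 := by linarith
      have hb1 : Real.pi * (s - Q' w) ≤ Real.pi / 2 := by
        have := mul_le_mul_of_nonneg_left (le_of_lt hphalf) Real.pi_pos.le
        linarith
      have hb1' : 0 ≤ Real.pi * (s - Q' w) := le_of_lt (mul_pos Real.pi_pos hp0)
      have hb2 : Real.pi * (s - w) ≤ Real.pi / 2 := by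
        have := mul_le_mul_of_nonneg_left hthalf Real.pi_pos.le
        linarith
      have hb2' : 0 < Real.pi * (s - w) := mul_pos Real.pi_pos ht0
      have hsin1 : |Real.sin (Real.pi * (Q' w - s))| = Real.sin (Real.pi * (s - Q' w)) := by
        rw [show Real.pi * (Q' w - s) = -(Real.pi * (s - Q' w)) by ring, Real.sin_neg,
          abs_neg, abs_of_nonneg]
        exact Real.sin_nonneg_of_nonneg_of_le_pi hb1' (by linarith [Real.pi_pos])
      have hsin2 : |Real.sin (Real.pi * (w - s))| = Real.sin (Real.pi * (s - w)) := by
        rw [show Real.pi * (w - s) = -(Real.pi * (s - w)) by ring, Real.sin_neg,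
          abs_neg, abs_of_nonneg]
        exact Real.sin_nonneg_of_nonneg_of_le_pi (le_of_lt hb2') (by linarith [Real.pi_pos])
      rw [hsin1, hsin2] at habs2
      have hsintpos : 0 < Real.sin (Real.pi * (s - w)) :=
        Real.sin_pos_of_pos_of_lt_pi hb2' (by linarith [Real.pi_pos])
      have hltsin : Real.sin (Real.pi * (s - Q' w)) < Real.sin (Real.pi * (s - w)) := by
        nlinarith [hsintpos, hκ1]
      have hPT : s - Q' w < s - w := by
        by_contra hge
        push_neg at hge
        have hm1 : Real.pi * (s - w) ∈ Set.Icc (-(Real.pi/2)) (Real.pi/2) :=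
          ⟨by linarith [Real.pi_pos], hb2⟩
        have hm2 : Real.pi * (s - Q' w) ∈ Set.Icc (-(Real.pi/2)) (Real.pi/2) :=
          ⟨by linarith [Real.pi_pos], hb1⟩
        have := Real.strictMonoOn_sin.monotoneOn hm1 hm2
          (mul_le_mul_of_nonneg_left hge Real.pi_pos.le)
        linarith
      exact ⟨by linarith, by linarith⟩
    have hiter : ∀ k : ℕ, x ≤ Q'^[k] x ∧ Q'^[k] x < s := by
      intro k
      induction k with
      | zero =>
        refine ⟨le_refl _, ?_⟩
        simp only [Function.iterate_zero_apply]
        rw [hxdef]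
        linarith
      | succ m ih =>
        rw [Function.iterate_succ_apply']
        obtain ⟨h1, h2⟩ := ih
        obtain ⟨h3, h4⟩ := hstep _ h1 h2
        exact ⟨le_trans h1 h3.le, h4⟩
    apply hfinal x
    · intro hco
      obtain ⟨k, hk⟩ := E4.expMap_eq_iff.mp hco
      have hb1 : (-1 : ℝ) < (k : ℝ) := by rw [hxdef] at hk; linarith
      have hb2 : (k : ℝ) < 0 := by rw [hxdef] at hk; linarith
      have hk1 : (-1 : ℤ) < k := by exact_mod_cast hb1
      have hk2 : k < 0 := by exact_mod_cast hb2
      omega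
    · intro k
      obtain ⟨h1, h2⟩ := hiter k
      rw [abs_of_neg (by linarith : Q'^[k] x - s < 0)]
      have hxs : s - x = τ / 2 := by rw [hxdef]; ring
      linarith
end

section
/- Let f : S¹ → S¹ be an expansive covering map of degree d ≥ 2 and let P(f; {a₀,…,a_r}) be a Markov partition for f satisfying conditions (uv) and (hol). Let a ∈ F₁ = {a₀,…,a_r} be a periodic point of f with orientation-preserving period q, let n ∈ ℕ, and let A be a complementary arc of F_n having a as an endpoint. Then A contains at least two and at most (r+1)^q complementary arcs of F_{n+q}. -/
open Set Filter

open Real Set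

namespace Pre

lemma expMap_mem_S1 (x : ℝ) : expMap x ∈ S1 := by
  simp only [S1, expMap, mem_setOf_eq, Complex.norm_exp]
  have : (2 * (π:ℝ) * Complex.I * (x:ℝ)).re = 0 := by
    simp [Complex.mul_re, Complex.mul_im]
  rw [this, Real.exp_zero]

lemma abs_expMap (x : ℝ) : ‖expMap x‖ = 1 := expMap_mem_S1 x

lemma continuous_expMap : Continuous expMap := by
  unfold expMap; fun_prop

lemma expMap_add (x y : ℝ) : expMap (x + y) = expMap x * expMap y := by
  unfold expMap
  rw [← Complex.exp_add]
  push_cast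
  ring_nf

lemma expMap_eq_iff {x y : ℝ} : expMap x = expMap y ↔ ∃ k : ℤ, x = y + k := by
  unfold expMap
  rw [Complex.exp_eq_exp_iff_exists_int]
  constructor
  · rintro ⟨n, hn⟩
    refine ⟨n, ?_⟩
    have h2 : (2 * (π:ℝ) * Complex.I) ≠ 0 := by
      simp [Complex.I_ne_zero, Real.pi_ne_zero]
    have : (2 * (π:ℝ) * Complex.I) * (x:ℂ) = (2 * (π:ℝ) * Complex.I) * ((y:ℝ) + (n:ℂ)) := by
      rw [hn]; ring
    have := mul_left_cancel₀ h2 this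
    have : (x:ℂ) = ((y + (n:ℝ)):ℝ) := by
      rw [this]; push_cast; ring
    exact_mod_cast Complex.ofReal_inj.mp this
  · rintro ⟨k, hk⟩
    exact ⟨k, by rw [hk]; push_cast; ring⟩

lemma expMap_add_int (x : ℝ) (k : ℤ) : expMap (x + k) = expMap x :=
  expMap_eq_iff.mpr ⟨k, rfl⟩

lemma expMap_inj_of_lt {x y : ℝ} (hxy : x < y) (h1 : y - x < 1) : expMap x ≠ expMap y := by
  intro h
  obtain ⟨k, hk⟩ := expMap_eq_iff.mp h
  have : (k:ℝ) = x - y := by linarith [hk]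
  have h2 : (-1:ℝ) < (k:ℝ) := by rw [this]; linarith
  have h3 : (k:ℝ) < 0 := by rw [this]; linarith
  have := Int.lt_iff_add_one_le.mp (by exact_mod_cast h3 : k < 0)
  have h4 : (-1:ℤ) < k := by exact_mod_cast h2
  omega

lemma expMap_surj {z : ℂ} (hz : z ∈ S1) : ∃ x : ℝ, expMap x = z := by
  refine ⟨Complex.arg z / (2 * π), ?_⟩
  have hπ : (2 * π) ≠ 0 := by positivity
  unfold expMap
  have : 2 * (π:ℝ) * Complex.I * ((Complex.arg z / (2*π) : ℝ):ℂ) = Complex.arg z * Complex.I := by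
    have hπC : ((π:ℝ):ℂ) ≠ 0 := by exact_mod_cast Real.pi_ne_zero
    push_cast
    field_simp
  rw [this]
  have := Complex.norm_mul_exp_arg_mul_I z
  rwa [show ‖z‖ = 1 from hz, Complex.ofReal_one, one_mul] at this

lemma expMap_lip {x y : ℝ} (h : 2 * π * |x - y| ≤ 1) :
    ‖expMap x - expMap y‖ ≤ 4 * π * |x - y| := by
  have hxy : expMap x - expMap y = expMap y * (expMap (x - y) - 1) := by
    rw [mul_sub, mul_one, ← expMap_add]; ring_nf
  rw [hxy, norm_mul, abs_expMap, one_mul]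
  have habs : ‖2 * (π:ℝ) * Complex.I * ((x - y : ℝ):ℂ)‖ = 2 * π * |x - y| := by
    rw [show 2 * (π:ℝ) * Complex.I * ((x - y : ℝ):ℂ) = (((2:ℝ) * π):ℂ) * Complex.I * (((x-y):ℝ):ℂ) by push_cast; ring]
    simp only [norm_mul, Complex.norm_I, Complex.norm_real, Real.norm_eq_abs, mul_one]
    rw [abs_of_nonneg (by norm_num : (0:ℝ) ≤ 2), abs_of_nonneg Real.pi_pos.le]
  have := Complex.norm_exp_sub_one_le (x := 2 * (π:ℝ) * Complex.I * ((x - y : ℝ):ℂ)) (by rw [habs]; exact h)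
  calc ‖expMap (x-y) - 1‖ ≤ 2 * ‖2 * (π:ℝ) * Complex.I * ((x - y : ℝ):ℂ)‖ := this
    _ = 4 * π * |x - y| := by rw [habs]; ring

end Pre

namespace Pre

section Lift

variable {f : ℂ → ℂ} {F : ℝ → ℝ}

lemma iterate_lift (hFe : ∀ x, f (expMap x) = expMap (F x)) :
    ∀ (m : ℕ) (x : ℝ), f^[m] (expMap x) = expMap (F^[m] x) := by
  intro m
  induction m with
  | zero => intro x; simp
  | succ m ih =>
    intro x
    rw [Function.iterate_succ_apply', Function.iterate_succ_apply', ih, hFe]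

/-- Two continuous lifts of the same circle map differ by an integer constant. -/
lemma lift_unique {H1 H2 : ℝ → ℝ} (h1 : Continuous H1) (h2 : Continuous H2)
    (he : ∀ x, expMap (H1 x) = expMap (H2 x)) : ∃ k : ℤ, ∀ x, H1 x = H2 x + k := by
  have hint : ∀ x, ∃ k : ℤ, H1 x - H2 x = k := by
    intro x
    obtain ⟨k, hk⟩ := expMap_eq_iff.mp (he x)
    exact ⟨k, by linarith⟩
  obtain ⟨k0, hk0⟩ := hint 0
  refine ⟨k0, fun x => ?_⟩
  by_contra hne
  obtain ⟨kx, hkx⟩ := hint x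
  have hkne : kx ≠ k0 := by
    intro h; rw [h] at hkx; exact hne (by linarith)
  set g : ℝ → ℝ := fun t => H1 t - H2 t with hg
  have hgc : Continuous g := h1.sub h2
  -- intermediate value gives a non-integer value
  have key : ∀ (u v : ℝ) (c : ℝ), c ∈ Set.Icc (g u) (g v) ∨ c ∈ Set.Icc (g v) (g u) →
      ∃ t, g t = c := by
    intro u v c hc
    rcases le_total u v with huv | huv
    · rcases hc with hc | hc
      · obtain ⟨t, _, ht⟩ := intermediate_value_Icc huv hgc.continuousOn hc
        exact ⟨t, ht⟩
      · obtain ⟨t, _, ht⟩ := intermediate_value_Icc' huv hgc.continuousOn hc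
        exact ⟨t, ht⟩
    · rcases hc with hc | hc
      · obtain ⟨t, _, ht⟩ := intermediate_value_Icc' huv hgc.continuousOn hc
        exact ⟨t, ht⟩
      · obtain ⟨t, _, ht⟩ := intermediate_value_Icc huv hgc.continuousOn hc
        exact ⟨t, ht⟩
  have hgx : g x = kx := hkx
  have hg0 : g 0 = k0 := hk0
  rcases lt_or_gt_of_ne (show (kx:ℝ) ≠ (k0:ℝ) by exact_mod_cast hkne) with hlt | hlt
  · have hm1 : g x ≤ (kx:ℝ) + 1/2 := by rw [hgx]; linarith
    have hm2 : (kx:ℝ) + 1/2 ≤ g 0 := by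
      rw [hg0]
      have h9 : kx < k0 := by exact_mod_cast hlt
      have h10 : (kx:ℝ) + 1 ≤ (k0:ℝ) := by exact_mod_cast h9
      linarith
    obtain ⟨t, ht⟩ := key x 0 ((kx:ℝ) + 1/2) (Or.inl ⟨hm1, hm2⟩)
    obtain ⟨m, hm⟩ := hint t
    have hm' : ((kx:ℝ)+1/2) = m := by rw [← ht]; exact hm
    have : (2*kx + 1 : ℝ) = 2*m := by push_cast at hm' ⊢; linarith
    have : (2*kx + 1 : ℤ) = 2*m := by exact_mod_cast this
    omega
  · have hm1 : g 0 ≤ (k0:ℝ) + 1/2 := by rw [hg0]; linarith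
    have hm2 : (k0:ℝ) + 1/2 ≤ g x := by
      rw [hgx]
      have h9 : k0 < kx := by exact_mod_cast hlt
      have h10 : (k0:ℝ) + 1 ≤ (kx:ℝ) := by exact_mod_cast h9
      linarith
    obtain ⟨t, ht⟩ := key 0 x ((k0:ℝ) + 1/2) (Or.inl ⟨hm1, hm2⟩)
    obtain ⟨m, hm⟩ := hint t
    have hm' : ((k0:ℝ)+1/2) = m := by rw [← ht]; exact hm
    have : (2*k0 + 1 : ℝ) = 2*m := by push_cast at hm' ⊢; linarith
    have : (2*k0 + 1 : ℤ) = 2*m := by exact_mod_cast this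
    omega

/-- From expansivity: points that collapse under `F` were far apart. -/
lemma collapse_far (hFe : ∀ x, f (expMap x) = expMap (F x))
    {δ : ℝ} (hδ : 0 < δ)
    (hδ' : ∀ a ∈ S1, ∀ b ∈ S1, a ≠ b → ∃ n : ℕ, δ < ‖f^[n] a - f^[n] b‖)
    {x y : ℝ} (hF : F x = F y) (hT : expMap x ≠ expMap y) :
    δ < ‖expMap x - expMap y‖ := by
  obtain ⟨n, hn⟩ := hδ' (expMap x) (expMap_mem_S1 x) (expMap y) (expMap_mem_S1 y) hT
  rcases Nat.eq_zero_or_pos n with h0 | hpos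
  · rw [h0] at hn; simpa using hn
  · exfalso
    obtain ⟨m, rfl⟩ := Nat.exists_eq_add_of_le hpos
    rw [iterate_lift hFe, iterate_lift hFe] at hn
    have : F^[1+m] x = F^[1+m] y := by
      rw [add_comm]
      rw [Function.iterate_add_apply, Function.iterate_add_apply]
      simp [hF]
    rw [this] at hn
    simp at hn
    linarith

/-- Small-interval injectivity of a lift of an expansive map. -/
lemma injOn_small (hexp : ExpansiveOn f) (hFe : ∀ x, f (expMap x) = expMap (F x)) :
    ∃ η : ℝ, 0 < η ∧ ∀ t : ℝ, Set.InjOn F (Set.Icc t (t + η)) := by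
  obtain ⟨δ, hδ, hδ'⟩ := hexp
  refine ⟨min (δ / (8 * Real.pi)) (1 / (4 * Real.pi)), by positivity, fun t => ?_⟩
  intro x hx y hy hF
  by_contra hne
  have hπ := Real.pi_pos
  set η := min (δ / (8 * Real.pi)) (1 / (4 * Real.pi)) with hη
  have hxy : |x - y| ≤ η := by
    rw [abs_le]
    simp only [Set.mem_Icc] at hx hy
    constructor <;> linarith
  have hη1 : η ≤ δ / (8 * Real.pi) := min_le_left _ _
  have hη2 : η ≤ 1 / (4 * Real.pi) := min_le_right _ _
  have hT : expMap x ≠ expMap y := by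
    rcases lt_or_gt_of_ne hne with h | h
    · exact expMap_inj_of_lt h (by
        have : |x - y| < 1 := lt_of_le_of_lt hxy (by
          calc η ≤ 1 / (4*Real.pi) := hη2
            _ < 1 := by rw [div_lt_one (by positivity)]; have := Real.pi_gt_three; linarith)
        rw [abs_sub_comm] at this
        calc y - x ≤ |y - x| := le_abs_self _
          _ < 1 := this)
    · exact (expMap_inj_of_lt h (by
        have : |x - y| < 1 := lt_of_le_of_lt hxy (by
          calc η ≤ 1 / (4*Real.pi) := hη2
            _ < 1 := by rw [div_lt_one (by positivity)]; have := Real.pi_gt_three; linarith)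
        calc x - y ≤ |x - y| := le_abs_self _
          _ < 1 := this)).symm
  have hfar := collapse_far hFe hδ hδ' hF hT
  have hlip := expMap_lip (x := x) (y := y) (by
    calc 2 * Real.pi * |x - y| ≤ 2 * Real.pi * (1/(4*Real.pi)) := by
          apply mul_le_mul_of_nonneg_left (le_trans hxy hη2) (by positivity)
      _ ≤ 1 := by rw [mul_one_div]; rw [div_le_one (by positivity)]; have := Real.pi_gt_three; linarith)
  have : ‖expMap x - expMap y‖ ≤ 4 * Real.pi * (δ / (8*Real.pi)) := by
    calc ‖expMap x - expMap y‖ ≤ 4 * Real.pi * |x - y| := hlip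
      _ ≤ 4 * Real.pi * (δ / (8*Real.pi)) := by
          apply mul_le_mul_of_nonneg_left (le_trans hxy hη1) (by positivity)
  have h2 : 4 * Real.pi * (δ / (8*Real.pi)) = δ / 2 := by field_simp; ring
  rw [h2] at this
  linarith

/-- Interval-injectivity extension (overlap trick). -/
lemma injOn_extend (hFc : Continuous F) {L : ℝ} (hL : 0 < L)
    (h : ∀ t : ℝ, Set.InjOn F (Set.Icc t (t + L))) :
    ∀ t : ℝ, Set.InjOn F (Set.Icc t (t + 3 * L / 2)) := by
  intro t
  have key : ∀ x y, x ∈ Set.Icc t (t + 3*L/2) → y ∈ Set.Icc t (t + 3*L/2) → F x = F y →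
      x < y → False := ?_
  · intro x hx y hy hF
    rcases lt_trichotomy x y with h | h | h
    · exact absurd hF (by intro hc; exact key x y hx hy hc h)
    · exact h
    · exact absurd hF.symm (by intro hc; exact key y x hy hx hc h)
  intro x y hx hy hF hxy
  simp only [Set.mem_Icc] at hx hy
  rcases le_or_gt (y - x) L with hcase | hcase
  · exact absurd (h x ⟨le_refl x, by linarith⟩ ⟨by linarith, by linarith⟩ hF) (by intro hc; exact absurd hc (ne_of_lt hxy))
  · set u := y - L with hu
    set v := x + L with hv
    have hxu : x < u := by simp [hu]; linarith
    have huv : u < v := by simp [hu, hv]; linarith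
    have hvy : v < y := by simp [hv]; linarith
    have hI1 : Set.Icc x (x + L) = Set.Icc x v := by rw [hv]
    have m1 := ContinuousOn.strictMonoOn_of_injOn_Icc' (by linarith : x ≤ x + L)
      hFc.continuousOn (h x)
    have m2 := ContinuousOn.strictMonoOn_of_injOn_Icc' (by linarith : u ≤ u + L)
      hFc.continuousOn (h u)
    have huL : u + L = y := by simp [hu]
    have hxI1 : x ∈ Set.Icc x (x + L) := ⟨le_refl _, by linarith⟩
    have huI1 : u ∈ Set.Icc x (x + L) := ⟨by linarith, by simp [hu]; linarith⟩
    have hvI1 : v ∈ Set.Icc x (x + L) := ⟨by simp [hv]; linarith, by simp [hv]⟩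
    have huI2 : u ∈ Set.Icc u (u + L) := ⟨le_refl _, by linarith⟩
    have hvI2 : v ∈ Set.Icc u (u + L) := ⟨by linarith, by rw [huL]; linarith⟩
    have hyI2 : y ∈ Set.Icc u (u + L) := ⟨by linarith, by rw [huL]⟩
    rcases m1 with m1 | m1 <;> rcases m2 with m2 | m2
    · have h1 : F x < F u := m1 hxI1 huI1 hxu
      have h2 : F u < F y := m2 huI2 hyI2 (by linarith)
      rw [hF] at h1; linarith
    · have h1 : F u < F v := m1 huI1 hvI1 huv
      have h2 : F v < F u := m2 huI2 hvI2 huv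
      linarith
    · have h1 : F v < F u := m1 huI1 hvI1 huv
      have h2 : F u < F v := m2 huI2 hvI2 huv
      linarith
    · have h1 : F u < F x := m1 hxI1 huI1 hxu
      have h2 : F y < F u := m2 huI2 hyI2 (by linarith)
      rw [hF] at h1; linarith

/-- A continuous lift of an expansive circle map is strictly monotone or antitone. -/
lemma lift_mono (hexp : ExpansiveOn f) (hFc : Continuous F)
    (hFe : ∀ x, f (expMap x) = expMap (F x)) :
    StrictMono F ∨ StrictAnti F := by
  obtain ⟨η, hη, hsmall⟩ := injOn_small hexp hFe
  have hstep : ∀ k : ℕ, ∀ t : ℝ, Set.InjOn F (Set.Icc t (t + η * (3/2)^k)) := by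
    intro k
    induction k with
    | zero => simpa using hsmall
    | succ k ih =>
      have := injOn_extend hFc (by positivity : 0 < η * (3/2)^k) ih
      intro t
      have heq : t + 3 * (η * (3/2)^k) / 2 = t + η * (3/2)^(k+1) := by ring
      rw [← heq]
      exact this t
  have hinj : Function.Injective F := by
    have key : ∀ x y, x < y → F x = F y → False := by
      intro x y hxy hF
      obtain ⟨k, hk⟩ := pow_unbounded_of_one_lt ((y - x)/η) (by norm_num : (1:ℝ) < 3/2)
      have hyx : y - x ≤ η * (3/2)^k := by
        rw [div_lt_iff₀ hη] at hk
        linarith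
      exact absurd (hstep k x ⟨le_refl _, by linarith⟩ ⟨by linarith, by linarith⟩ hF)
        (ne_of_lt hxy)
    intro x y hF
    rcases lt_trichotomy x y with h | h | h
    · exact absurd hF (by intro hc; exact key x y h hc)
    · exact h
    · exact absurd hF.symm (by intro hc; exact key y x h hc)
  exact Continuous.strictMono_of_inj hFc hinj

lemma mono_or_anti_iterate {F : ℝ → ℝ} (h : StrictMono F ∨ StrictAnti F) (m : ℕ) :
    StrictMono F^[m] ∨ StrictAnti F^[m] := by
  induction m with
  | zero => left; simpa using strictMono_id
  | succ m ih =>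
    rw [Function.iterate_succ]
    rcases ih with ih | ih <;> rcases h with h | h
    · left; exact ih.comp h
    · right; exact ih.comp_strictAnti h
    · right; exact ih.comp_strictMono h
    · left; exact ih.comp h

end Lift

end Pre

namespace Pre

/-- Integer-shift stability from ±1 stability. -/
lemma shift_mem {Λ : Set ℝ} (hper : ∀ t ∈ Λ, t + 1 ∈ Λ ∧ t - 1 ∈ Λ) :
    ∀ (k : ℤ) (t : ℝ), t ∈ Λ → t + k ∈ Λ := by
  intro k
  induction k using Int.induction_on with
  | zero => intro t ht; simpa using ht
  | succ n ih =>
    intro t ht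
    have := (hper _ (ih t ht)).1
    have he : t + ((n:ℤ) + 1 : ℤ) = (t + (n:ℤ)) + 1 := by push_cast; ring
    rwa [he]
  | pred n ih =>
    intro t ht
    have := (hper _ (ih t ht)).2
    have he : t + (-(n:ℤ) - 1 : ℤ) = (t + (-(n:ℤ):ℤ)) - 1 := by push_cast; ring
    rwa [he]

/-- Existence of the gap of a closed, 1-periodic, nonempty set around a point
not in the set. -/
lemma gap_exists {Λ : Set ℝ} (hcl : IsClosed Λ) (hper : ∀ t ∈ Λ, t + 1 ∈ Λ ∧ t - 1 ∈ Λ)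
    (hne : Λ.Nonempty) {t : ℝ} (ht : t ∉ Λ) :
    ∃ α β : ℝ, α ∈ Λ ∧ β ∈ Λ ∧ α < t ∧ t < β ∧ ∀ w ∈ Λ, w ∉ Set.Ioo α β := by
  obtain ⟨s, hs⟩ := hne
  have hshift := shift_mem hper
  have hbelow : (Λ ∩ Set.Iic t).Nonempty := by
    refine ⟨s + (⌊t - s⌋ : ℤ), hshift _ _ hs, ?_⟩
    have := Int.floor_le (t - s)
    simp only [Set.mem_Iic]
    linarith
  have habove : (Λ ∩ Set.Ici t).Nonempty := by
    refine ⟨s + (⌈t - s⌉ : ℤ), hshift _ _ hs, ?_⟩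
    have := Int.le_ceil (t - s)
    simp only [Set.mem_Ici]
    linarith
  have hba : BddAbove (Λ ∩ Set.Iic t) := ⟨t, fun w hw => hw.2⟩
  have hbb : BddBelow (Λ ∩ Set.Ici t) := ⟨t, fun w hw => hw.2⟩
  have hclA : IsClosed (Λ ∩ Set.Iic t) := hcl.inter isClosed_Iic
  have hclB : IsClosed (Λ ∩ Set.Ici t) := hcl.inter isClosed_Ici
  set α := sSup (Λ ∩ Set.Iic t)
  set β := sInf (Λ ∩ Set.Ici t)
  have hαmem : α ∈ Λ ∩ Set.Iic t := hclA.csSup_mem hbelow hba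
  have hβmem : β ∈ Λ ∩ Set.Ici t := hclB.csInf_mem habove hbb
  refine ⟨α, β, hαmem.1, hβmem.1, lt_of_le_of_ne hαmem.2 (fun h => ht (h ▸ hαmem.1)), 
    lt_of_le_of_ne hβmem.2 (fun h => ht (h.symm ▸ hβmem.1)), ?_⟩
  intro w hw hw2
  rcases le_total w t with h | h
  · exact absurd (le_csSup hba ⟨hw, h⟩) (not_le.mpr hw2.1)
  · exact absurd (csInf_le hbb ⟨hw, h⟩) (not_le.mpr hw2.2)

/-- Uniqueness of gaps. -/
lemma gap_unique {Λ : Set ℝ} {t α β α' β' : ℝ}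
    (hα : α ∈ Λ) (hβ : β ∈ Λ) (hαt : α < t) (htβ : t < β) (hgap : ∀ w ∈ Λ, w ∉ Set.Ioo α β)
    (hα' : α' ∈ Λ) (hβ' : β' ∈ Λ) (hαt' : α' < t) (htβ' : t < β')
    (hgap' : ∀ w ∈ Λ, w ∉ Set.Ioo α' β') : α = α' ∧ β = β' := by
  constructor
  · rcases lt_trichotomy α α' with h | h | h
    · exact absurd (show α' ∈ Set.Ioo α β from ⟨h, by linarith⟩) (hgap α' hα')
    · exact h
    · exact absurd (show α ∈ Set.Ioo α' β' from ⟨h, by linarith⟩) (hgap' α hα)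
  · rcases lt_trichotomy β β' with h | h | h
    · exact absurd (show β ∈ Set.Ioo α' β' from ⟨by linarith, h⟩) (hgap' β hβ)
    · exact h
    · exact absurd (show β' ∈ Set.Ioo α β from ⟨by linarith, h⟩) (hgap β' hβ')

/-- The set of lifts of a finite set of points on the circle meets any compact
interval in a finite set. -/
lemma lifts_inter_finite {r : ℕ} {a : Fin (r+1) → ℂ} {x : Fin (r+1) → ℝ}
    (hax : ∀ k, a k = expMap (x k)) (c c' : ℝ) :
    ({t : ℝ | expMap t ∈ Set.range a} ∩ Set.Icc c c').Finite := by
  have hsub : {t : ℝ | expMap t ∈ Set.range a} ∩ Set.Icc c c' ⊆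
      ⋃ k : Fin (r+1), (fun j : ℤ => x k + j) '' (Set.Icc ⌈c - x k - 1⌉ ⌊c' - x k + 1⌋) := by
    rintro t ⟨htm, htc⟩
    obtain ⟨k, hk⟩ := htm
    obtain ⟨j, hj⟩ := expMap_eq_iff.mp (hk.symm ▸ hax k ▸ rfl : expMap (x k) = expMap t)
    -- x k = t + j, so t = x k - j
    refine Set.mem_iUnion.mpr ⟨k, ⟨-j, ?_, ?_⟩⟩
    · simp only [Set.mem_Icc]
      constructor
      · apply Int.ceil_le.mpr
        push_cast
        simp only [Set.mem_Icc] at htc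
        linarith [hj, htc.1]
      · apply Int.le_floor.mpr
        push_cast
        simp only [Set.mem_Icc] at htc
        linarith [hj, htc.2]
    · push_cast
      linarith [hj]
  apply Set.Finite.subset _ hsub
  apply Set.finite_iUnion
  intro k
  exact (Set.finite_Icc _ _).image _

/-- Preimage of a locally finite lift set under a strictly monotone map is
locally finite. -/
lemma preimage_inter_finite {H : ℝ → ℝ} (hH : StrictMono H ∨ StrictAnti H)
    {P : Set ℝ} (hP : ∀ c c' : ℝ, (P ∩ Set.Icc c c').Finite) (c c' : ℝ) :
    ({t : ℝ | H t ∈ P} ∩ Set.Icc c c').Finite := by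
  rcases le_or_gt c' c with h | h
  · refine Set.Finite.subset (Set.finite_singleton c) ?_
    rintro w ⟨-, hw⟩
    rw [Set.mem_Icc] at hw
    simp only [Set.mem_singleton_iff]
    linarith [hw.1, hw.2]
  have hinj : Function.Injective H := by
    rcases hH with h | h
    · exact h.injective
    · exact h.injective
  have himg : H '' ({t : ℝ | H t ∈ P} ∩ Set.Icc c c') ⊆
      P ∩ Set.Icc (min (H c) (H c')) (max (H c) (H c')) := by
    rintro w ⟨t, ⟨htP, htc⟩, rfl⟩
    refine ⟨htP, ?_, ?_⟩
    · rcases hH with hm | hm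
      · exact le_trans (min_le_left _ _) (hm.monotone htc.1)
      · exact le_trans (min_le_right _ _) (hm.antitone htc.2)
    · rcases hH with hm | hm
      · exact le_trans (hm.monotone htc.2) (le_max_right _ _)
      · exact le_trans (hm.antitone htc.1) (le_max_left _ _)
  have := Set.Finite.subset (hP _ _) himg
  exact Set.Finite.of_finite_image this (hinj.injOn)

end Pre

namespace Pre

/-- The connected component of `S¹ ∖ K` containing `expMap t` is the image of the
gap of the lift of `K` around `t`. -/
lemma componentIn_eq {K : Set ℂ} {t α β : ℝ}
    (hα : expMap α ∈ K) (hβ : expMap β ∈ K) (hαt : α < t) (htβ : t < β)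
    (hgap : ∀ w : ℝ, α < w → w < β → expMap w ∉ K) :
    connectedComponentIn (S1 \ K) (expMap t) = expMap '' (Set.Ioo α β) := by
  have hlen : β ≤ α + 1 := by
    by_contra h
    push_neg at h
    refine hgap (α + 1) (by linarith) (by linarith) ?_
    have h1 : expMap (α + 1) = expMap α := by
      have := expMap_add_int α 1
      simpa using this
    rw [h1]; exact hα
  have hsub : expMap '' (Set.Ioo α β) ⊆ S1 \ K := by
    rintro z ⟨s, hs, rfl⟩
    exact ⟨expMap_mem_S1 s, hgap s hs.1 hs.2⟩
  have hmem : expMap t ∈ expMap '' (Set.Ioo α β) := ⟨t, ⟨hαt, htβ⟩, rfl⟩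
  have hconn : IsPreconnected (expMap '' (Set.Ioo α β)) :=
    isPreconnected_Ioo.image _ continuous_expMap.continuousOn
  apply le_antisymm
  swap
  · exact hconn.subset_connectedComponentIn hmem hsub
  -- the hard inclusion
  set Cl : Set ℂ := expMap '' (Set.Icc α β) with hCl
  set D : Set ℂ := expMap '' (Set.Icc β (α + 1)) with hD
  have hClc : IsClosed Cl := ((isCompact_Icc).image continuous_expMap).isClosed
  have hDc : IsClosed D := ((isCompact_Icc).image continuous_expMap).isClosed
  -- image of open gap is disjoint from D
  have hdisj : ∀ z ∈ expMap '' (Set.Ioo α β), z ∉ D := by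
    rintro z ⟨s, hs, rfl⟩ ⟨s', hs', he⟩
    obtain ⟨k, hk⟩ := expMap_eq_iff.mp he
    have h1 : (0:ℝ) < (k:ℝ) := by
      have : s' = s + k := hk
      simp only [Set.mem_Icc] at hs'
      simp only [Set.mem_Ioo] at hs
      nlinarith [hs'.1, hs.2]
    have h2 : (k:ℝ) < 1 := by
      simp only [Set.mem_Icc] at hs'
      simp only [Set.mem_Ioo] at hs
      nlinarith [hs'.2, hs.1]
    have h1' : 0 < k := by exact_mod_cast h1
    have h2' : k < 1 := by exact_mod_cast h2
    omega
  -- points of S1 \ K outside D are in the image of the open gap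
  have hout : ∀ z, z ∈ S1 \ K → z ∉ D → z ∈ expMap '' (Set.Ioo α β) := by
    rintro z ⟨hzS, hzK⟩ hzD
    obtain ⟨s₀, hs₀⟩ := expMap_surj hzS
    obtain ⟨k, hk1, hk2⟩ : ∃ k : ℤ, α < s₀ - k ∧ s₀ - k ≤ α + 1 := by
      refine ⟨⌈s₀ - α - 1⌉, ?_, ?_⟩
      · have := Int.ceil_lt_add_one (s₀ - α - 1)
        linarith
      · have := Int.le_ceil (s₀ - α - 1)
        linarith
    have hse : expMap (s₀ - k) = z := by
      rw [← hs₀]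
      exact expMap_eq_iff.mpr ⟨-k, by push_cast; ring⟩
    have hsβ : s₀ - k < β := by
      by_contra hc
      push_neg at hc
      exact hzD ⟨s₀ - k, ⟨hc, hk2⟩, hse⟩
    exact ⟨s₀ - k, ⟨hk1, hsβ⟩, hse⟩
  -- image of closed gap meets S1 ∖ K only in the open image
  have hclS : ∀ z, z ∈ Cl → z ∈ S1 \ K → z ∈ expMap '' (Set.Ioo α β) := by
    rintro z ⟨s, hs, rfl⟩ ⟨hzS, hzK⟩
    rcases eq_or_lt_of_le hs.1 with h1 | h1
    · exact absurd (h1 ▸ hα) hzK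
    rcases eq_or_lt_of_le hs.2 with h2 | h2
    · exact absurd (h2 ▸ hβ) hzK
    exact ⟨s, ⟨h1, h2⟩, rfl⟩
  -- now the preconnectedness argument
  intro z hz
  by_contra hzn
  have hC := isPreconnected_connectedComponentIn (x := expMap t) (F := S1 \ K)
  have hCsub : connectedComponentIn (S1 \ K) (expMap t) ⊆ S1 \ K :=
    connectedComponentIn_subset _ _
  have happ := hC Dᶜ Clᶜ hDc.isOpen_compl hClc.isOpen_compl ?_ ?_ ?_
  · obtain ⟨y, hyC, hyD, hyCl⟩ := happ
    exact hyCl (Set.image_mono Set.Ioo_subset_Icc_self (hout y (hCsub hyC) hyD))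
  · -- covering
    intro c hc
    by_cases hcD : c ∈ expMap '' (Set.Ioo α β)
    · exact Or.inl (hdisj c hcD)
    · right
      intro hcCl
      exact hcD (hclS c hcCl (hCsub hc))
  · exact ⟨expMap t, mem_connectedComponentIn ⟨expMap_mem_S1 t, hgap t hαt htβ⟩,
      hdisj _ hmem⟩
  · refine ⟨z, hz, fun hzCl => hzn (hclS z hzCl (hCsub hz))⟩

lemma closure_image_Ioo {α β : ℝ} (h : α < β) :
    closure (expMap '' (Set.Ioo α β)) = expMap '' (Set.Icc α β) := by
  apply le_antisymm
  · apply closure_minimal (Set.image_mono Set.Ioo_subset_Icc_self)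
    exact ((isCompact_Icc).image continuous_expMap).isClosed
  · rw [← closure_Ioo h.ne]
    exact image_closure_subset_closure_image continuous_expMap

end Pre

namespace Pre

/-- Lift of the set `F_{j+1}` to the real line. -/
def lamS {r : ℕ} (F : ℝ → ℝ) (a : Fin (r+1) → ℂ) (j : ℕ) : Set ℝ :=
  {t : ℝ | expMap (F^[j] t) ∈ Set.range a}

section Count

variable {f : ℂ → ℂ} {r : ℕ} {a : Fin (r+1) → ℂ} {x : Fin (r+1) → ℝ} {F : ℝ → ℝ}

lemma mem_lamS_zero {t : ℝ} : t ∈ lamS F a 0 ↔ expMap t ∈ Set.range a := by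
  simp [lamS]

lemma mem_lamS_succ {j : ℕ} {t : ℝ} : t ∈ lamS F a (j+1) ↔ F t ∈ lamS F a j := by
  simp only [lamS, Set.mem_setOf_eq, Function.iterate_succ_apply]

lemma mem_lamS_add {i j : ℕ} {t : ℝ} : t ∈ lamS F a (i+j) ↔ F^[j] t ∈ lamS F a i := by
  simp only [lamS, Set.mem_setOf_eq, Function.iterate_add_apply]

lemma P_step (hFe : ∀ t, f (expMap t) = expMap (F t)) (hinv : ∀ k, ∃ j, f (a k) = a j)
    {t : ℝ} (ht : t ∈ lamS F a 0) : F t ∈ lamS F a 0 := by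
  rw [mem_lamS_zero] at ht ⊢
  obtain ⟨k, hk⟩ := ht
  obtain ⟨j, hj⟩ := hinv k
  exact ⟨j, by rw [← hj, hk, hFe]⟩

lemma lamS_mono (hFe : ∀ t, f (expMap t) = expMap (F t)) (hinv : ∀ k, ∃ j, f (a k) = a j)
    {j j' : ℕ} (h : j ≤ j') : lamS F a j ⊆ lamS F a j' := by
  induction j' with
  | zero => simp_all
  | succ j' ih =>
    rcases Nat.eq_or_lt_of_le h with h' | h'
    · rw [h']
    · intro t ht
      have ht' : t ∈ lamS F a j' := ih (by omega) ht
      simp only [lamS, Set.mem_setOf_eq, Function.iterate_succ_apply'] at ht' ⊢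
      obtain ⟨k, hk⟩ := ht'
      obtain ⟨j'', hj''⟩ := hinv k
      exact ⟨j'', by rw [← hj'', hk, hFe]⟩

lemma lamS_per (hFe : ∀ t, f (expMap t) = expMap (F t)) {j : ℕ} :
    ∀ t ∈ lamS F a j, t + 1 ∈ lamS F a j ∧ t - 1 ∈ lamS F a j := by
  have key : ∀ s t : ℝ, expMap s = expMap t → s ∈ lamS F a j → t ∈ lamS F a j := by
    intro s t hst hs
    simp only [lamS, Set.mem_setOf_eq] at hs ⊢
    rw [← iterate_lift hFe, ← hst, iterate_lift hFe]
    exact hs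
  intro t ht
  constructor
  · exact key t (t+1) (by simpa using (expMap_add_int t 1).symm) ht
  · exact key t (t-1) (by simpa using (expMap_add_int (t-1) 1)) ht

lemma lamS_closed (hFc : Continuous F) {j : ℕ} : IsClosed (lamS F a j) := by
  have : lamS F a j = (fun t => expMap (F^[j] t)) ⁻¹' (Set.range a) := rfl
  rw [this]
  exact IsClosed.preimage (continuous_expMap.comp (hFc.iterate j))
    (Set.finite_range a).isClosed

lemma lamS_finite_icc (hax : ∀ k, a k = expMap (x k))
    (hFmono : StrictMono F ∨ StrictAnti F) {j : ℕ} (c c' : ℝ) :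
    (lamS F a j ∩ Set.Icc c c').Finite := by
  have : lamS F a j = {t : ℝ | F^[j] t ∈ {s : ℝ | expMap s ∈ Set.range a}} := rfl
  rw [this]
  exact preimage_inter_finite (mono_or_anti_iterate hFmono j)
    (fun c c' => lifts_inter_finite hax c c') c c'

lemma lamS_nonempty (hax : ∀ k, a k = expMap (x k)) {j : ℕ}
    (hFe : ∀ t, f (expMap t) = expMap (F t)) (hinv : ∀ k, ∃ j, f (a k) = a j) :
    (lamS F a j).Nonempty :=
  ⟨x 0, lamS_mono hFe hinv (Nat.zero_le j) (mem_lamS_zero.mpr ⟨0, hax 0⟩)⟩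

end Count

end Pre

namespace Pre

section Count2

variable {f : ℂ → ℂ} {r : ℕ} {a : Fin (r+1) → ℂ} {x : Fin (r+1) → ℝ} {F : ℝ → ℝ}

lemma mem_P_shift (hax : ∀ k, a k = expMap (x k)) (k : Fin (r+1)) (m : ℤ) :
    x k + (m:ℝ) ∈ lamS F a 0 :=
  mem_lamS_zero.mpr ⟨k, by rw [hax k]; exact (expMap_add_int (x k) m).symm⟩

/-- Any gap of a set containing the partition lifts is shorter than 1. -/
lemma gap_lt_one (hax : ∀ k, a k = expMap (x k)) (hxm : StrictMono x)
    (hxl : x (Fin.last r) < x 0 + 1) (hr : 1 ≤ r)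
    {Λ : Set ℝ} (hPsub : lamS F a 0 ⊆ Λ) {α β : ℝ} (hαβ : α < β)
    (hgap : ∀ w ∈ Λ, w ∉ Set.Ioo α β) : β - α < 1 := by
  by_contra hc
  push_neg at hc
  have hr1 : 1 < r + 1 := by omega
  have h01 : (0 : Fin (r+1)) < ⟨1, hr1⟩ := by
    rw [Fin.lt_def]; simp
  have hx01 : x 0 < x ⟨1, hr1⟩ := hxm h01
  have hx01' : x ⟨1, hr1⟩ - x 0 < 1 := by
    have := hxm.monotone (Fin.le_last ⟨1, hr1⟩)
    linarith
  have hs0 : α < x 0 + ((⌊α - x 0⌋ + 1 : ℤ) : ℝ) ∧ x 0 + ((⌊α - x 0⌋ + 1 : ℤ) : ℝ) ≤ α + 1 := by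
    have h1 := Int.lt_floor_add_one (α - x 0)
    have h2 := Int.floor_le (α - x 0)
    constructor <;> (push_cast; linarith)
  have hs1 : α < x ⟨1, hr1⟩ + ((⌊α - x ⟨1, hr1⟩⌋ + 1 : ℤ) : ℝ) ∧
      x ⟨1, hr1⟩ + ((⌊α - x ⟨1, hr1⟩⌋ + 1 : ℤ) : ℝ) ≤ α + 1 := by
    have h1 := Int.lt_floor_add_one (α - x ⟨1, hr1⟩)
    have h2 := Int.floor_le (α - x ⟨1, hr1⟩)
    constructor <;> (push_cast; linarith)
  have hs0P : x 0 + ((⌊α - x 0⌋ + 1 : ℤ) : ℝ) ∈ lamS F a 0 := mem_P_shift hax 0 _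
  have hs1P : x ⟨1, hr1⟩ + ((⌊α - x ⟨1, hr1⟩⌋ + 1 : ℤ) : ℝ) ∈ lamS F a 0 := mem_P_shift hax _ _
  have hne : x 0 + ((⌊α - x 0⌋ + 1 : ℤ) : ℝ) ≠ x ⟨1, hr1⟩ + ((⌊α - x ⟨1, hr1⟩⌋ + 1 : ℤ) : ℝ) := by
    intro h
    have hd : x ⟨1, hr1⟩ - x 0 = ((⌊α - x 0⌋ - ⌊α - x ⟨1, hr1⟩⌋ : ℤ) : ℝ) := by
      push_cast at h ⊢
      linarith
    have h1' : 0 < (⌊α - x 0⌋ - ⌊α - x ⟨1, hr1⟩⌋ : ℤ) := by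
      have : (0:ℝ) < ((⌊α - x 0⌋ - ⌊α - x ⟨1, hr1⟩⌋ : ℤ) : ℝ) := by rw [← hd]; linarith
      exact_mod_cast this
    have h2' : (⌊α - x 0⌋ - ⌊α - x ⟨1, hr1⟩⌋ : ℤ) < 1 := by
      have : ((⌊α - x 0⌋ - ⌊α - x ⟨1, hr1⟩⌋ : ℤ) : ℝ) < 1 := by rw [← hd]; linarith
      exact_mod_cast this
    omega
  have hex : ∃ s, s ∈ lamS F a 0 ∧ α < s ∧ s < α + 1 := by
    rcases lt_or_eq_of_le hs0.2 with h | h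
    · exact ⟨_, hs0P, hs0.1, h⟩
    · rcases lt_or_eq_of_le hs1.2 with h' | h'
      · exact ⟨_, hs1P, hs1.1, h'⟩
      · exact absurd (h.trans h'.symm) hne
  obtain ⟨s, hsP, hsα, hsα1⟩ := hex
  exact hgap s (hPsub hsP) ⟨hsα, by linarith⟩

/-- Each gap of the partition lift set maps into an open partition arc. -/
lemma gap_openArc (hax : ∀ k, a k = expMap (x k)) (hxm : StrictMono x)
    (hxl : x (Fin.last r) < x 0 + 1) (hr : 1 ≤ r)
    {u v : ℝ} (hu : u ∈ lamS F a 0) (huv : u < v)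
    (hgap : ∀ w ∈ lamS F a 0, w ∉ Set.Ioo u v) :
    ∃ k : Fin (r+1), ∀ w ∈ Set.Ioo u v, expMap w ∈ openArc (a k) (a (k+1)) := by
  obtain ⟨k, hk⟩ := mem_lamS_zero.mp hu
  have hk' : expMap (x k) = expMap u := by rw [← hax k]; exact hk
  obtain ⟨m', hm'⟩ := expMap_eq_iff.mp hk'
  -- x k = u + m', so u = x k + (-m')
  have hum : u = x k + ((-m' : ℤ) : ℝ) := by push_cast; push_cast at hm'; linarith
  refine ⟨k, ?_⟩
  by_cases hklast : k = Fin.last r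
  · -- wrap-around arc
    have hpP : x 0 + ((-m' + 1 : ℤ) : ℝ) ∈ lamS F a 0 := mem_P_shift hax 0 _
    have hx0l : x 0 < x (Fin.last r) := by
      apply hxm
      rw [Fin.lt_def]
      simp only [Fin.val_zero, Fin.val_last]
      omega
    have hup : u < x 0 + ((-m' + 1 : ℤ) : ℝ) := by
      rw [hum, hklast]; push_cast; linarith
    have hpu1 : x 0 + ((-m' + 1 : ℤ) : ℝ) < u + 1 := by
      rw [hum, hklast]; push_cast; linarith
    have hvp : v ≤ x 0 + ((-m' + 1 : ℤ) : ℝ) := by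
      by_contra hcon
      push_neg at hcon
      exact hgap _ hpP ⟨hup, hcon⟩
    intro w hw
    refine ⟨u, w, x 0 + ((-m' + 1 : ℤ) : ℝ), hk, rfl, ?_, hw.1, lt_of_lt_of_le hw.2 hvp, hpu1⟩
    rw [hklast, Fin.last_add_one, hax 0]
    exact (expMap_add_int (x 0) _).symm
  · -- ordinary arc
    have hklt : k < Fin.last r := lt_of_le_of_ne (Fin.le_last k) hklast
    have hksucc : k < k + 1 := Fin.lt_add_one_iff.mpr hklt
    have hpP : x (k+1) + ((-m' : ℤ) : ℝ) ∈ lamS F a 0 := mem_P_shift hax (k+1) _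
    have hup : u < x (k+1) + ((-m' : ℤ) : ℝ) := by
      rw [hum]
      have := hxm hksucc
      linarith
    have hpu1 : x (k+1) + ((-m' : ℤ) : ℝ) < u + 1 := by
      rw [hum]
      have h1 : x (k+1) ≤ x (Fin.last r) := hxm.monotone (Fin.le_last _)
      have h2 : x 0 ≤ x k := hxm.monotone (Fin.zero_le k)
      push_cast
      linarith
    have hvp : v ≤ x (k+1) + ((-m' : ℤ) : ℝ) := by
      by_contra hcon
      push_neg at hcon
      exact hgap _ hpP ⟨hup, hcon⟩
    intro w hw
    refine ⟨u, w, x (k+1) + ((-m' : ℤ) : ℝ), hk, rfl, ?_, hw.1, lt_of_lt_of_le hw.2 hvp, hpu1⟩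
    rw [hax (k+1)]
    exact (expMap_add_int (x (k+1)) _).symm

/-- Injectivity of `f` on partition arcs bounds the span of the image of a gap. -/
lemma span_le_one (hax : ∀ k, a k = expMap (x k)) (hxm : StrictMono x)
    (hxl : x (Fin.last r) < x 0 + 1) (hr : 1 ≤ r)
    (hFc : Continuous F) (hFe : ∀ t, f (expMap t) = expMap (F t))
    (hinj : ∀ k, Set.InjOn f (openArc (a k) (a (k+1))))
    {u v : ℝ} (hu : u ∈ lamS F a 0) (huv : u < v) (hv1 : v - u < 1)
    (hgap : ∀ w ∈ lamS F a 0, w ∉ Set.Ioo u v) :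
    |F v - F u| ≤ 1 := by
  obtain ⟨k, hk⟩ := gap_openArc hax hxm hxl hr hu huv hgap
  by_contra hc
  push_neg at hc
  have key : ∀ c₁ : ℝ, (∃ w1 ∈ Set.Ioo u v, F w1 = c₁) → (∃ w2 ∈ Set.Ioo u v, F w2 = c₁ + 1) →
      False := by
    rintro c₁ ⟨w1, hw1, hFw1⟩ ⟨w2, hw2, hFw2⟩
    have hne : w1 ≠ w2 := by
      intro h
      rw [h, hFw2] at hFw1
      linarith
    have hTne : expMap w1 ≠ expMap w2 := by
      rcases lt_or_gt_of_ne hne with h | h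
      · exact expMap_inj_of_lt h (by simp only [Set.mem_Ioo] at hw1 hw2; linarith)
      · exact (expMap_inj_of_lt h (by simp only [Set.mem_Ioo] at hw1 hw2; linarith)).symm
    have h1T : expMap (c₁ + 1) = expMap c₁ := by
      have := expMap_add_int c₁ 1
      push_cast at this
      exact this
    have hfeq : f (expMap w1) = f (expMap w2) := by
      rw [hFe, hFe, hFw1, hFw2, h1T]
    exact hTne (hinj k (hk w1 hw1) (hk w2 hw2) hfeq)
  rw [lt_abs] at hc
  rcases hc with h1 | h1
  · have hε : 0 < (F v - F u - 1) / 2 := by linarith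
    have hiv := intermediate_value_Ioo (le_of_lt huv) hFc.continuousOn
    obtain ⟨w1, hw1, hFw1⟩ := hiv (show F u + (F v - F u - 1)/2 ∈ Set.Ioo (F u) (F v) from
      ⟨by linarith, by linarith⟩)
    obtain ⟨w2, hw2, hFw2⟩ := hiv (show F u + (F v - F u - 1)/2 + 1 ∈ Set.Ioo (F u) (F v) from
      ⟨by linarith, by linarith⟩)
    exact key _ ⟨w1, hw1, hFw1⟩ ⟨w2, hw2, hFw2⟩
  · have h2 : 1 < F u - F v := by linarith
    have hε : 0 < (F u - F v - 1) / 2 := by linarith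
    have hiv := intermediate_value_Ioo' (le_of_lt huv) hFc.continuousOn
    obtain ⟨w1, hw1, hFw1⟩ := hiv (show F v + (F u - F v - 1)/2 ∈ Set.Ioo (F v) (F u) from
      ⟨by linarith, by linarith⟩)
    obtain ⟨w2, hw2, hFw2⟩ := hiv (show F v + (F u - F v - 1)/2 + 1 ∈ Set.Ioo (F v) (F u) from
      ⟨by linarith, by linarith⟩)
    exact key _ ⟨w1, hw1, hFw1⟩ ⟨w2, hw2, hFw2⟩

/-- At most `r` partition-lift points strictly inside a unit window. -/
lemma count_P {c c' : ℝ} (hc : c ∈ lamS F a 0) (hcc : c' ≤ c + 1) :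
    (lamS F a 0 ∩ Set.Ioo c c').ncard ≤ r := by
  classical
  have hφ : ∃ φ : ℝ → Fin (r+1), ∀ t, expMap t ∈ Set.range a → a (φ t) = expMap t := by
    refine ⟨fun t => if h : expMap t ∈ Set.range a then h.choose else 0, fun t ht => ?_⟩
    simp only [dif_pos ht]
    exact ht.choose_spec
  obtain ⟨φ, hφ_spec⟩ := hφ
  obtain ⟨kc, hkc⟩ := mem_lamS_zero.mp hc
  have hmaps : ∀ t ∈ lamS F a 0 ∩ Set.Ioo c c', φ t ∈ {k : Fin (r+1) | a k ≠ expMap c} := by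
    rintro t ⟨htP, htI⟩
    have hsp := hφ_spec t (mem_lamS_zero.mp htP)
    simp only [Set.mem_setOf_eq, hsp]
    intro h
    exact expMap_inj_of_lt htI.1 (by simp only [Set.mem_Ioo] at htI; linarith) h.symm
  have hinj : Set.InjOn φ (lamS F a 0 ∩ Set.Ioo c c') := by
    rintro t ⟨htP, htI⟩ t' ⟨htP', htI'⟩ heq
    have h1 := hφ_spec t (mem_lamS_zero.mp htP)
    have h2 := hφ_spec t' (mem_lamS_zero.mp htP')
    rw [heq] at h1
    have hTT : expMap t = expMap t' := by rw [← h1, ← h2]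
    by_contra hne
    rcases lt_or_gt_of_ne hne with h | h
    · exact expMap_inj_of_lt h (by simp only [Set.mem_Ioo] at htI htI'; linarith) hTT
    · exact expMap_inj_of_lt h (by simp only [Set.mem_Ioo] at htI htI'; linarith) hTT.symm
  have htarget : ({k : Fin (r+1) | a k ≠ expMap c}).ncard ≤ r := by
    have hsub : {k : Fin (r+1) | a k ≠ expMap c} ⊆ Set.univ \ {kc} := by
      intro k hkk
      refine ⟨Set.mem_univ _, ?_⟩
      simp only [Set.mem_singleton_iff]
      intro h
      exact hkk (h ▸ hkc)
    calc ({k : Fin (r+1) | a k ≠ expMap c}).ncard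
        ≤ (Set.univ \ {kc} : Set (Fin (r+1))).ncard :=
          Set.ncard_le_ncard hsub (Set.toFinite _)
      _ = (Set.univ : Set (Fin (r+1))).ncard - 1 := by
          rw [Set.ncard_diff_singleton_of_mem (Set.mem_univ kc)]
      _ = r := by rw [Set.ncard_univ]; simp
  calc (lamS F a 0 ∩ Set.Ioo c c').ncard
      ≤ ({k : Fin (r+1) | a k ≠ expMap c}).ncard :=
        Set.ncard_le_ncard_of_injOn φ hmaps hinj (Set.toFinite _)
    _ ≤ r := htarget

end Count2

end Pre

namespace Pre

section Count3

variable {f : ℂ → ℂ} {r : ℕ} {a : Fin (r+1) → ℂ} {x : Fin (r+1) → ℝ} {F : ℝ → ℝ}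

lemma lamS_finite_ioo (hax : ∀ k, a k = expMap (x k))
    (hFmono : StrictMono F ∨ StrictAnti F) {j : ℕ} (c c' : ℝ) :
    (lamS F a j ∩ Set.Ioo c c').Finite :=
  (lamS_finite_icc hax hFmono c c').subset
    (Set.inter_subset_inter_right _ Set.Ioo_subset_Icc_self)

lemma count_aux (hax : ∀ k, a k = expMap (x k)) (hFmono : StrictMono F ∨ StrictAnti F)
    (q : ℕ)
    (IH : ∀ u v : ℝ, u ∈ lamS F a 0 → v ∈ lamS F a 0 → u < v →
      (∀ w ∈ lamS F a 0, w ∉ Set.Ioo u v) →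
      (lamS F a q ∩ Set.Ioo u v).ncard ≤ (r+1)^q - 1) :
    ∀ j : ℕ, ∀ c c' : ℝ, c ∈ lamS F a 0 → c' ∈ lamS F a 0 → c < c' → c' ≤ c + 1 →
      (lamS F a 0 ∩ Set.Ioo c c').ncard = j →
      (lamS F a q ∩ Set.Ioo c c').ncard ≤ j + (j+1) * ((r+1)^q - 1) := by
  intro j
  induction j using Nat.strong_induction_on with
  | _ j SIH =>
    intro c c' hc hc' hcc hcc1 hj
    rcases Set.eq_empty_or_nonempty (lamS F a 0 ∩ Set.Ioo c c') with hemp | ⟨p, hpP, hpI⟩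
    · have hj0 : j = 0 := by rw [← hj, hemp, Set.ncard_empty]
      subst hj0
      have hgap : ∀ w ∈ lamS F a 0, w ∉ Set.Ioo c c' := by
        intro w hw hwI
        rw [Set.eq_empty_iff_forall_notMem] at hemp
        exact hemp w ⟨hw, hwI⟩
      calc (lamS F a q ∩ Set.Ioo c c').ncard ≤ (r+1)^q - 1 := IH c c' hc hc' hcc hgap
        _ ≤ 0 + (0+1) * ((r+1)^q - 1) := by omega
    · -- split at p
      have hfin0 : ∀ e e' : ℝ, (lamS F a 0 ∩ Set.Ioo e e').Finite :=
        fun e e' => lamS_finite_ioo hax hFmono e e'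
      have hfinq : ∀ e e' : ℝ, (lamS F a q ∩ Set.Ioo e e').Finite :=
        fun e e' => lamS_finite_ioo hax hFmono e e'
      have hsplit : lamS F a 0 ∩ Set.Ioo c c' =
          (lamS F a 0 ∩ Set.Ioo c p) ∪ ({p} ∪ (lamS F a 0 ∩ Set.Ioo p c')) := by
        ext w
        simp only [Set.mem_inter_iff, Set.mem_Ioo, Set.mem_union, Set.mem_singleton_iff]
        constructor
        · rintro ⟨hwP, hw1, hw2⟩
          rcases lt_trichotomy w p with h | h | h
          · exact Or.inl ⟨hwP, hw1, h⟩
          · exact Or.inr (Or.inl h)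
          · exact Or.inr (Or.inr ⟨hwP, h, hw2⟩)
        · rintro (⟨hwP, hw1, hw2⟩ | h | ⟨hwP, hw1, hw2⟩)
          · exact ⟨hwP, hw1, lt_trans hw2 hpI.2⟩
          · subst h; exact ⟨hpP, hpI⟩
          · exact ⟨hwP, lt_trans hpI.1 hw1, hw2⟩
      have hdisj2 : Disjoint ({p} : Set ℝ) (lamS F a 0 ∩ Set.Ioo p c') := by
        rw [Set.disjoint_left]
        rintro w rfl ⟨-, hw⟩
        exact lt_irrefl _ hw.1
      have hdisj1 : Disjoint (lamS F a 0 ∩ Set.Ioo c p) ({p} ∪ (lamS F a 0 ∩ Set.Ioo p c')) := by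
        rw [Set.disjoint_left]
        rintro w ⟨-, hw⟩ hmem
        rcases hmem with h | ⟨-, hw'⟩
        · rw [Set.mem_singleton_iff] at h; subst h; exact lt_irrefl _ hw.2
        · exact lt_asymm hw.2 hw'.1
      set j1 := (lamS F a 0 ∩ Set.Ioo c p).ncard with hj1
      set j2 := (lamS F a 0 ∩ Set.Ioo p c').ncard with hj2
      have hcount : j = j1 + 1 + j2 := by
        rw [← hj, hsplit, Set.ncard_union_eq hdisj1 (hfin0 _ _)
          ((Set.finite_singleton p).union (hfin0 _ _)),
          Set.ncard_union_eq hdisj2 (Set.finite_singleton p) (hfin0 _ _)]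
        simp [Set.ncard_singleton]
        omega
      have hq1 : (lamS F a q ∩ Set.Ioo c p).ncard ≤ j1 + (j1+1) * ((r+1)^q - 1) :=
        SIH j1 (by omega) c p hc hpP hpI.1 (by linarith [hpI.2]) rfl
      have hq2 : (lamS F a q ∩ Set.Ioo p c').ncard ≤ j2 + (j2+1) * ((r+1)^q - 1) :=
        SIH j2 (by omega) p c' hpP hc' hpI.2 (by linarith [hpI.1]) rfl
      have hsub : lamS F a q ∩ Set.Ioo c c' ⊆
          (lamS F a q ∩ Set.Ioo c p) ∪ ({p} ∪ (lamS F a q ∩ Set.Ioo p c')) := by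
        rintro w ⟨hwq, hw1, hw2⟩
        rcases lt_trichotomy w p with h | h | h
        · exact Or.inl ⟨hwq, hw1, h⟩
        · exact Or.inr (Or.inl h)
        · exact Or.inr (Or.inr ⟨hwq, h, hw2⟩)
      have hbound : (lamS F a q ∩ Set.Ioo c c').ncard ≤
          (lamS F a q ∩ Set.Ioo c p).ncard + (1 + (lamS F a q ∩ Set.Ioo p c').ncard) := by
        calc (lamS F a q ∩ Set.Ioo c c').ncard
            ≤ ((lamS F a q ∩ Set.Ioo c p) ∪ ({p} ∪ (lamS F a q ∩ Set.Ioo p c'))).ncard :=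
              Set.ncard_le_ncard hsub (((hfinq _ _).union
                ((Set.finite_singleton p).union (hfinq _ _))))
          _ ≤ (lamS F a q ∩ Set.Ioo c p).ncard + ({p} ∪ (lamS F a q ∩ Set.Ioo p c')).ncard :=
              Set.ncard_union_le _ _
          _ ≤ (lamS F a q ∩ Set.Ioo c p).ncard +
              (({p} : Set ℝ).ncard + (lamS F a q ∩ Set.Ioo p c').ncard) := by
              gcongr
              exact Set.ncard_union_le _ _
          _ = (lamS F a q ∩ Set.Ioo c p).ncard + (1 + (lamS F a q ∩ Set.Ioo p c').ncard) := by
              rw [Set.ncard_singleton]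
      have hX : 1 ≤ (r+1)^q := Nat.one_le_pow _ _ (by omega)
      calc (lamS F a q ∩ Set.Ioo c c').ncard
          ≤ (lamS F a q ∩ Set.Ioo c p).ncard + (1 + (lamS F a q ∩ Set.Ioo p c').ncard) := hbound
        _ ≤ (j1 + (j1+1) * ((r+1)^q - 1)) + (1 + (j2 + (j2+1) * ((r+1)^q - 1))) := by omega
        _ = j + (j+1) * ((r+1)^q - 1) := by
            rw [hcount]
            ring
  
lemma count_upper (hax : ∀ k, a k = expMap (x k)) (hxm : StrictMono x)
    (hxl : x (Fin.last r) < x 0 + 1) (hr : 1 ≤ r)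
    (hFc : Continuous F) (hFe : ∀ t, f (expMap t) = expMap (F t))
    (hFmono : StrictMono F ∨ StrictAnti F)
    (hinv : ∀ k, ∃ j, f (a k) = a j)
    (hinj : ∀ k, Set.InjOn f (openArc (a k) (a (k+1)))) :
    ∀ q : ℕ, ∀ u v : ℝ, u ∈ lamS F a 0 → v ∈ lamS F a 0 → u < v →
      (∀ w ∈ lamS F a 0, w ∉ Set.Ioo u v) →
      (lamS F a q ∩ Set.Ioo u v).ncard ≤ (r+1)^q - 1 := by
  intro q
  induction q with
  | zero =>
    intro u v hu hv huv hgap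
    have : lamS F a 0 ∩ Set.Ioo u v = ∅ := by
      rw [Set.eq_empty_iff_forall_notMem]
      rintro w ⟨hw, hwI⟩
      exact hgap w hw hwI
    rw [this, Set.ncard_empty]
    omega
  | succ q IH =>
    intro u v hu hv huv hgap
    have hv1 : v - u < 1 := gap_lt_one hax hxm hxl hr (subset_refl _) huv hgap
    have hspan := span_le_one hax hxm hxl hr hFc hFe hinj hu huv hv1 hgap
    have hFu : F u ∈ lamS F a 0 := P_step hFe hinv hu
    have hFv : F v ∈ lamS F a 0 := P_step hFe hinv hv
    have hXle : ∀ j : ℕ, j ≤ r → j + (j+1) * ((r+1)^q - 1) ≤ (r+1)^(q+1) - 1 := by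
      intro j hj
      have hX : 1 ≤ (r+1)^q := Nat.one_le_pow _ _ (by omega)
      have h1 : (j+1) * ((r+1)^q - 1) ≤ (r+1) * ((r+1)^q - 1) :=
        Nat.mul_le_mul_right _ (by omega)
      have h2 : (r+1) * ((r+1)^q - 1) = (r+1)^(q+1) - (r+1) := by
        rw [Nat.mul_sub]
        rw [pow_succ]
        ring_nf
      have h3 : (r+1) ≤ (r+1)^(q+1) := Nat.le_self_pow (by omega) _
      omega
    rcases hFmono with hm | hm
    · -- increasing case
      have himg : F '' (lamS F a (q+1) ∩ Set.Ioo u v) = lamS F a q ∩ Set.Ioo (F u) (F v) := by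
        apply le_antisymm
        · rintro s ⟨t, ⟨htq, htI⟩, rfl⟩
          exact ⟨mem_lamS_succ.mp htq, hm htI.1, hm htI.2⟩
        · rintro s ⟨hsq, hsI⟩
          obtain ⟨t, htI, hts⟩ := intermediate_value_Ioo (le_of_lt huv) hFc.continuousOn hsI
          exact ⟨t, ⟨mem_lamS_succ.mpr (hts ▸ hsq), htI⟩, hts⟩
      have hcc : F u < F v := hm huv
      have hcc1 : F v ≤ F u + 1 := by
        rw [abs_le] at hspan
        linarith [hspan.1, hspan.2]
      have := count_aux hax (Or.inl hm) q IH ((lamS F a 0 ∩ Set.Ioo (F u) (F v)).ncard)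
        (F u) (F v) hFu hFv hcc hcc1 rfl
      have hjr : (lamS F a 0 ∩ Set.Ioo (F u) (F v)).ncard ≤ r := count_P hFu hcc1
      calc (lamS F a (q+1) ∩ Set.Ioo u v).ncard
          = (F '' (lamS F a (q+1) ∩ Set.Ioo u v)).ncard :=
            (Set.ncard_image_of_injOn (hm.injective.injOn)).symm
        _ = (lamS F a q ∩ Set.Ioo (F u) (F v)).ncard := by rw [himg]
        _ ≤ _ := this
        _ ≤ (r+1)^(q+1) - 1 := hXle _ hjr
    · -- decreasing case
      have himg : F '' (lamS F a (q+1) ∩ Set.Ioo u v) = lamS F a q ∩ Set.Ioo (F v) (F u) := by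
        apply le_antisymm
        · rintro s ⟨t, ⟨htq, htI⟩, rfl⟩
          exact ⟨mem_lamS_succ.mp htq, hm htI.2, hm htI.1⟩
        · rintro s ⟨hsq, hsI⟩
          obtain ⟨t, htI, hts⟩ := intermediate_value_Ioo' (le_of_lt huv) hFc.continuousOn hsI
          exact ⟨t, ⟨mem_lamS_succ.mpr (hts ▸ hsq), htI⟩, hts⟩
      have hcc : F v < F u := hm huv
      have hcc1 : F u ≤ F v + 1 := by
        rw [abs_le] at hspan
        linarith [hspan.1, hspan.2]
      have := count_aux hax (Or.inr hm) q IH ((lamS F a 0 ∩ Set.Ioo (F v) (F u)).ncard)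
        (F v) (F u) hFv hFu hcc hcc1 rfl
      have hjr : (lamS F a 0 ∩ Set.Ioo (F v) (F u)).ncard ≤ r := count_P hFv hcc1
      calc (lamS F a (q+1) ∩ Set.Ioo u v).ncard
          = (F '' (lamS F a (q+1) ∩ Set.Ioo u v)).ncard :=
            (Set.ncard_image_of_injOn (hm.injective.injOn)).symm
        _ = (lamS F a q ∩ Set.Ioo (F v) (F u)).ncard := by rw [himg]
        _ ≤ _ := this
        _ ≤ (r+1)^(q+1) - 1 := hXle _ hjr

end Count3

end Pre

namespace Pre

section Engine

variable {f : ℂ → ℂ} {F G : ℝ → ℝ} {q : ℕ}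

/-- Uniform-continuity package for the first `q` iterates (in lift form). -/
lemma unif_pack (hFc : Continuous F) {u v δ : ℝ} (hδ : 0 < δ) (qm : ℕ) :
    ∃ ε : ℝ, 0 < ε ∧ ∀ s ∈ Set.Icc u v, ∀ t ∈ Set.Icc u v, |s - t| ≤ ε →
      ∀ j < qm, ‖expMap (F^[j] s) - expMap (F^[j] t)‖ ≤ δ := by
  induction qm with
  | zero => exact ⟨1, one_pos, fun s _ t _ _ j hj => absurd hj (Nat.not_lt_zero j)⟩
  | succ qm ih =>
    obtain ⟨ε₀, hε₀, hε₀'⟩ := ih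
    have hcont : ContinuousOn (fun t => expMap (F^[qm] t)) (Set.Icc u v) :=
      (continuous_expMap.comp (hFc.iterate qm)).continuousOn
    have huc := isCompact_Icc.uniformContinuousOn_of_continuous hcont
    rw [Metric.uniformContinuousOn_iff_le] at huc
    obtain ⟨ε₁, hε₁, hε₁'⟩ := huc δ hδ
    refine ⟨min ε₀ (ε₁ / 2), by positivity, ?_⟩
    intro s hs t ht hst j hj
    rcases Nat.lt_or_ge j qm with h | h
    · exact hε₀' s hs t ht (le_trans hst (min_le_left _ _)) j h
    · have hj' : j = qm := by omega
      subst hj'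
      have : dist s t ≤ ε₁ := by
        rw [Real.dist_eq]
        calc |s - t| ≤ min ε₀ (ε₁/2) := hst
          _ ≤ ε₁/2 := min_le_right _ _
          _ ≤ ε₁ := by linarith
      have := hε₁' s hs t ht this
      rwa [Complex.dist_eq] at this
  
/-- The expansivity engine: a monotone invariant interval for a lift of a
return map contradicts expansivity. -/
lemma engine (hq : 0 < q) (hexp : ExpansiveOn f)
    (hFc : Continuous F) (hFe : ∀ t, f (expMap t) = expMap (F t))
    (hGc : Continuous G) (hGe : ∀ t, f^[q] (expMap t) = expMap (G t))
    (hGm : StrictMono G)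
    {u v : ℝ} (huv : u < v) (hlen : v - u < 1)
    (hGinv : ∀ t, t ∈ Set.Icc u v → G t ∈ Set.Icc u v) : False := by
  obtain ⟨δ, hδ, hδ'⟩ := hexp
  obtain ⟨ε, hε, hε'⟩ := unif_pack (F := F) (u := u) (v := v) hFc hδ q
  -- key iteration formula
  have hiter : ∀ (k j : ℕ) (t : ℝ), f^[q*k + j] (expMap t) = expMap (F^[j] (G^[k] t)) := by
    intro k j t
    rw [add_comm, Function.iterate_add_apply, Function.iterate_mul]
    rw [iterate_lift hGe, iterate_lift hFe]
  -- the pair-confinement contradiction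
  have hpair : ∀ s t : ℝ, s ∈ Set.Icc u v → t ∈ Set.Icc u v → s ≠ t →
      (∀ k : ℕ, G^[k] s ∈ Set.Icc u v ∧ G^[k] t ∈ Set.Icc u v ∧ |G^[k] s - G^[k] t| ≤ ε) →
      False := by
    intro s t hs ht hst hconf
    have hTne : expMap s ≠ expMap t := by
      rcases lt_or_gt_of_ne hst with h | h
      · exact expMap_inj_of_lt h (by
          simp only [Set.mem_Icc] at hs ht
          linarith)
      · exact (expMap_inj_of_lt h (by
          simp only [Set.mem_Icc] at hs ht
          linarith)).symm
    obtain ⟨m, hm⟩ := hδ' (expMap s) (expMap_mem_S1 s) (expMap t) (expMap_mem_S1 t) hTne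
    have hdecomp : m = q * (m / q) + m % q := (Nat.div_add_mod m q).symm
    rw [hdecomp, hiter, hiter] at hm
    obtain ⟨h1, h2, h3⟩ := hconf (m / q)
    have := hε' _ h1 _ h2 h3 (m % q) (Nat.mod_lt _ hq)
    linarith
  -- case 1 : G is the identity on [u,v]
  by_cases hid : ∀ t ∈ Set.Icc u v, G t = t
  · have hfix : ∀ (k : ℕ) (t : ℝ), t ∈ Set.Icc u v → G^[k] t = t := by
      intro k
      induction k with
      | zero => intro t _; simp
      | succ k ih =>
        intro t htm
        rw [Function.iterate_succ_apply, hid t htm, ih t htm]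
    set t2 := min v (u + ε) with ht2
    have ht2u : u < t2 := by
      rw [ht2]
      rcases le_or_gt v (u + ε) with h | h
      · rw [min_eq_left h]; exact huv
      · rw [min_eq_right (le_of_lt h)]; linarith
    have ht2m : t2 ∈ Set.Icc u v := ⟨le_of_lt ht2u, min_le_left _ _⟩
    refine hpair u t2 ⟨le_refl _, le_of_lt huv⟩ ht2m (ne_of_lt ht2u) ?_
    intro k
    rw [hfix k u ⟨le_refl _, le_of_lt huv⟩, hfix k t2 ht2m]
    refine ⟨⟨le_refl _, le_of_lt huv⟩, ht2m, ?_⟩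
    rw [abs_sub_comm, abs_of_nonneg (by linarith)]
    calc t2 - u ≤ (u + ε) - u := by
          have := min_le_right v (u + ε)
          linarith
      _ = ε := by ring
  -- case 2 : there is a non-fixed point; its orbit converges to a fixed point
  · push_neg at hid
    obtain ⟨w, hw, hwne⟩ := hid
    have horb : ∀ k : ℕ, G^[k] w ∈ Set.Icc u v := by
      intro k
      induction k with
      | zero => simpa using hw
      | succ k ih =>
        rw [Function.iterate_succ_apply']
        exact hGinv _ ih
    rcases lt_or_gt_of_ne hwne with hlt | hgt
    · -- G w < w : decreasing orbit, converges to the infimum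
      have hmono : ∀ k : ℕ, G^[k+1] w < G^[k] w := by
        intro k
        induction k with
        | zero => simpa using hlt
        | succ k ih =>
          simpa [← Function.iterate_succ_apply'] using hGm ih
      have hanti : Antitone (fun k => G^[k] w) :=
        antitone_nat_of_succ_le (fun k => le_of_lt (hmono k))
      have hbdd : BddBelow (Set.range (fun k => G^[k] w)) := by
        refine ⟨u, ?_⟩
        rintro y ⟨k, rfl⟩
        exact (horb k).1
      have htend : Filter.Tendsto (fun k => G^[k] w) Filter.atTop (nhds (⨅ k, G^[k] w)) :=
        tendsto_atTop_ciInf hanti hbdd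
      set p := ⨅ k, G^[k] w with hp
      have hpm : p ∈ Set.Icc u v := by
        constructor
        · exact le_ciInf (fun k => (horb k).1)
        · exact le_trans (ciInf_le hbdd 0) (by simpa using hw.2)
      have hGp : G p = p := by
        have h1 : Filter.Tendsto (fun k => G (G^[k] w)) Filter.atTop (nhds (G p)) :=
          (hGc.tendsto p).comp htend
        have h2 : (fun k => G (G^[k] w)) = fun k => G^[k+1] w := by
          funext k
          rw [Function.iterate_succ_apply']
        rw [h2] at h1
        have h3 : Filter.Tendsto (fun k => G^[k+1] w) Filter.atTop (nhds p) := by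
          have := htend.comp (Filter.tendsto_add_atTop_nat 1)
          exact this
        exact tendsto_nhds_unique h1 h3
      have hplt : ∀ k, p < G^[k] w := by
        intro k
        calc p ≤ G^[k+1] w := ciInf_le hbdd (k+1)
          _ < G^[k] w := hmono k
      -- choose K with G^[K] w - p ≤ ε
      have hev : ∃ K : ℕ, G^[K] w - p ≤ ε := by
        have := Metric.tendsto_atTop.mp htend ε hε
        obtain ⟨K, hK⟩ := this
        refine ⟨K, ?_⟩
        have := hK K (le_refl K)
        rw [Real.dist_eq, abs_sub_lt_iff] at this
        linarith [this.1]
      obtain ⟨K, hK⟩ := hev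
      refine hpair (G^[K] w) p (horb K) hpm (ne_of_gt (hplt K)) ?_
      intro k
      have hfixp : G^[k] p = p := Function.iterate_fixed hGp k
      have hGkK : G^[k] (G^[K] w) = G^[k+K] w := by
        rw [← Function.iterate_add_apply]
      rw [hfixp, hGkK]
      refine ⟨horb _, hpm, ?_⟩
      rw [abs_of_nonneg (by linarith [hplt (k+K)])]
      have hmono2 : G^[k+K] w ≤ G^[K] w := by
        have : ∀ i : ℕ, G^[i + K] w ≤ G^[K] w := by
          intro i
          induction i with
          | zero => simp
          | succ i ih =>
            calc G^[i+1+K] w = G^[(i+K)+1] w := by ring_nf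
              _ ≤ G^[i+K] w := le_of_lt (hmono (i+K))
              _ ≤ G^[K] w := ih
        exact this k
      linarith
    · -- G w > w : increasing orbit, converges to the supremum
      have hmono : ∀ k : ℕ, G^[k] w < G^[k+1] w := by
        intro k
        induction k with
        | zero => simpa using hgt
        | succ k ih =>
          simpa [← Function.iterate_succ_apply'] using hGm ih
      have hmon : Monotone (fun k => G^[k] w) :=
        monotone_nat_of_le_succ (fun k => le_of_lt (hmono k))
      have hbdd : BddAbove (Set.range (fun k => G^[k] w)) := by
        refine ⟨v, ?_⟩
        rintro y ⟨k, rfl⟩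
        exact (horb k).2
      have htend : Filter.Tendsto (fun k => G^[k] w) Filter.atTop (nhds (⨆ k, G^[k] w)) :=
        tendsto_atTop_ciSup hmon hbdd
      set p := ⨆ k, G^[k] w with hp
      have hpm : p ∈ Set.Icc u v := by
        constructor
        · exact le_trans (by simpa using hw.1) (le_ciSup hbdd 0)
        · exact ciSup_le (fun k => (horb k).2)
      have hGp : G p = p := by
        have h1 : Filter.Tendsto (fun k => G (G^[k] w)) Filter.atTop (nhds (G p)) :=
          (hGc.tendsto p).comp htend
        have h2 : (fun k => G (G^[k] w)) = fun k => G^[k+1] w := by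
          funext k
          rw [Function.iterate_succ_apply']
        rw [h2] at h1
        have h3 : Filter.Tendsto (fun k => G^[k+1] w) Filter.atTop (nhds p) := by
          have := htend.comp (Filter.tendsto_add_atTop_nat 1)
          exact this
        exact tendsto_nhds_unique h1 h3
      have hplt : ∀ k, G^[k] w < p := by
        intro k
        calc G^[k] w < G^[k+1] w := hmono k
          _ ≤ p := le_ciSup hbdd (k+1)
      have hev : ∃ K : ℕ, p - G^[K] w ≤ ε := by
        have := Metric.tendsto_atTop.mp htend ε hε
        obtain ⟨K, hK⟩ := this
        refine ⟨K, ?_⟩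
        have := hK K (le_refl K)
        rw [Real.dist_eq, abs_sub_lt_iff] at this
        linarith [this.2]
      obtain ⟨K, hK⟩ := hev
      refine hpair (G^[K] w) p (horb K) hpm (ne_of_lt (hplt K)) ?_
      intro k
      have hfixp : G^[k] p = p := Function.iterate_fixed hGp k
      have hGkK : G^[k] (G^[K] w) = G^[k+K] w := by
        rw [← Function.iterate_add_apply]
      rw [hfixp, hGkK]
      refine ⟨horb _, hpm, ?_⟩
      rw [abs_of_nonpos (by linarith [hplt (k+K)])]
      have hmono2 : G^[K] w ≤ G^[k+K] w := by
        have : ∀ i : ℕ, G^[K] w ≤ G^[i + K] w := by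
          intro i
          induction i with
          | zero => simp
          | succ i ih =>
            calc G^[K] w ≤ G^[i+K] w := ih
              _ ≤ G^[(i+K)+1] w := le_of_lt (hmono (i+K))
              _ = G^[i+1+K] w := by ring_nf
        exact this k
      linarith

end Engine

end Pre

namespace Pre

section Assembly

variable {f : ℂ → ℂ} {r : ℕ} {a : Fin (r+1) → ℂ} {x : Fin (r+1) → ℝ} {F : ℝ → ℝ}

lemma mem_Fset_iff (hFe : ∀ t, f (expMap t) = expMap (F t)) {m : ℕ} {t : ℝ} :
    expMap t ∈ Fset f a (m+1) ↔ t ∈ lamS F a m := by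
  simp only [Fset, Set.mem_setOf_eq, Nat.add_sub_cancel, lamS, iterate_lift hFe]
  exact and_iff_right (expMap_mem_S1 t)

lemma orbit_in_range (hinv : ∀ k, ∃ j, f (a k) = a j) {z : ℂ} (hz : z ∈ Set.range a) :
    ∀ m : ℕ, f^[m] z ∈ Set.range a := by
  intro m
  induction m with
  | zero => simpa using hz
  | succ m ih =>
    rw [Function.iterate_succ_apply']
    obtain ⟨k, hk⟩ := ih
    obtain ⟨j, hj⟩ := hinv k
    exact ⟨j, by rw [← hj, hk]⟩

lemma image_Icc_shift (c d : ℝ) (k : ℤ) :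
    expMap '' Set.Icc (c + (k:ℝ)) (d + (k:ℝ)) = expMap '' Set.Icc c d := by
  ext z
  constructor
  · rintro ⟨s, hs, rfl⟩
    exact ⟨s - k, ⟨by linarith [hs.1], by linarith [hs.2]⟩,
      expMap_eq_iff.mpr ⟨-k, by push_cast; ring⟩⟩
  · rintro ⟨s, hs, rfl⟩
    exact ⟨s + k, ⟨by linarith [hs.1], by linarith [hs.2]⟩,
      expMap_eq_iff.mpr ⟨k, rfl⟩⟩

lemma lamS_shift (hFe : ∀ t, f (expMap t) = expMap (F t)) {j : ℕ} (k : ℤ) {t : ℝ} :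
    t + (k:ℝ) ∈ lamS F a j ↔ t ∈ lamS F a j := by
  constructor
  · intro h
    have := shift_mem (lamS_per hFe) (-k) _ h
    simpa using this
  · intro h
    exact shift_mem (lamS_per hFe) k _ h

end Assembly

end Pre

open Pre in
/-- **Lemma (pre-expansivity).** Let `a₀` be a periodic partition point with
orientation-preserving period `q`, and let `A` be a complementary arc of `F_n`
having `a₀` as an endpoint. Then `A` contains at least two and at most `(r+1)^q`
complementary arcs of `F_{n+q}`. -/
theorem complementary_arc_subdivision_count
    (f : ℂ → ℂ) (d : ℤ) (hd : 2 ≤ d.natAbs)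
    (hcov : IsCircleCovering f d) (hexp : ExpansiveOn f)
    (r : ℕ) (a : Fin (r + 1) → ℂ) (hM : MarkovPartition f r a)
    (hUV : CondUV f r a) (hHol : CondHol f r a)
    (a0 : ℂ) (ha0 : a0 ∈ Set.range a) (q : ℕ) (hq : OPPeriod f a0 q)
    (n : ℕ) (hn : 1 ≤ n) (A : Set ℂ) (hA : IsComplArc f a n A) (haA : a0 ∈ A) :
    {B : Set ℂ | IsComplArc f a (n + q) B ∧ B ⊆ A}.Finite ∧
    2 ≤ {B : Set ℂ | IsComplArc f a (n + q) B ∧ B ⊆ A}.ncard ∧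
    {B : Set ℂ | IsComplArc f a (n + q) B ∧ B ⊆ A}.ncard ≤ (r + 1) ^ q := by
  classical
  obtain ⟨F, hFc, hFe, hFd⟩ := hcov
  obtain ⟨x, hxm, hax, hxl⟩ := hM.cyclic
  have hinv := hM.invariant
  have hinjf := hM.injOn
  have hr : 1 ≤ r := hM.rpos
  have hq0 : 0 < q := hq.1
  have hFmono : StrictMono F ∨ StrictAnti F := lift_mono hexp hFc hFe
  obtain ⟨n1, rfl⟩ : ∃ n1, n = n1 + 1 := ⟨n - 1, by omega⟩
  -- index bookkeeping
  have hidx : n1 + 1 + q = (n1 + q) + 1 := by omega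
  rw [hidx]
  -- unpack the complementary arc A
  obtain ⟨z₀, hz₀, hAeq⟩ := hA
  obtain ⟨t₀, ht₀⟩ := expMap_surj hz₀.1
  have ht₀n : t₀ ∉ lamS F a n1 := by
    intro h
    exact hz₀.2 (ht₀ ▸ (mem_Fset_iff hFe).mpr h)
  -- the gap of Λ_n around t₀
  obtain ⟨α, β, hαm, hβm, hαt, htβ, hgapn⟩ :=
    gap_exists (lamS_closed hFc) (lamS_per hFe) (lamS_nonempty hax hFe hinv) ht₀n
  have hαβ : α < β := lt_trans hαt htβ
  have hβα1 : β - α < 1 :=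
    gap_lt_one hax hxm hxl hr (lamS_mono hFe hinv (Nat.zero_le n1)) hαβ hgapn
  -- identification of A
  have hcompn : connectedComponentIn (S1 \ Fset f a (n1+1)) z₀ = expMap '' Set.Ioo α β := by
    rw [← ht₀]
    apply componentIn_eq ((mem_Fset_iff hFe).mpr hαm) ((mem_Fset_iff hFe).mpr hβm) hαt htβ
    intro w hw1 hw2 hwK
    exact hgapn w ((mem_Fset_iff hFe).mp hwK) ⟨hw1, hw2⟩
  have hAe : A = expMap '' Set.Icc α β := by
    rw [hAeq, hcompn, closure_image_Ioo hαβ]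
  -- the endpoint corresponding to a0
  have hq_mem : ∀ {j j' : ℕ}, j ≤ j' → lamS F a j ⊆ lamS F a j' := fun h => lamS_mono hFe hinv h
  have hαq : α ∈ lamS F a (n1 + q) := hq_mem (by omega) hαm
  have hβq : β ∈ lamS F a (n1 + q) := hq_mem (by omega) hβm
  obtain ⟨s, hsend, hsa0⟩ : ∃ s, (s = α ∨ s = β) ∧ expMap s = a0 := by
    rw [hAe] at haA
    obtain ⟨s, hsI, hsa⟩ := haA
    have hsn : s ∈ lamS F a n1 := by
      rw [← mem_Fset_iff hFe (m := n1)]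
      rw [hsa]
      refine ⟨?_, ?_⟩
      · rw [← hsa]; exact expMap_mem_S1 s
      · simp only [Nat.add_sub_cancel]
        exact orbit_in_range hinv ha0 n1
    rcases eq_or_lt_of_le hsI.1 with h | h
    · exact ⟨s, Or.inl h.symm, hsa⟩
    rcases eq_or_lt_of_le hsI.2 with h' | h'
    · exact ⟨s, Or.inr h', hsa⟩
    · exact absurd ⟨h, h'⟩ (hgapn s hsn)
  -- the subdivision set in lift coordinates
  set E : Set ℝ := lamS F a (n1+q) ∩ Set.Ioo α β with hE
  have hEfin : E.Finite := lamS_finite_ioo hax hFmono α β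
  -- the parametrization of complementary arcs inside A
  set θ : ℝ → Set ℂ := fun w => expMap '' Set.Icc (sSup (lamS F a (n1+q) ∩ Set.Ico α w)) w
    with hθ
  have hgv : ∀ v ∈ lamS F a (n1+q) ∩ Set.Ioc α β,
      sSup (lamS F a (n1+q) ∩ Set.Ico α v) ∈ lamS F a (n1+q) ∧
      α ≤ sSup (lamS F a (n1+q) ∩ Set.Ico α v) ∧
      sSup (lamS F a (n1+q) ∩ Set.Ico α v) < v ∧
      (∀ w ∈ lamS F a (n1+q), w ∉ Set.Ioo (sSup (lamS F a (n1+q) ∩ Set.Ico α v)) v) := by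
    rintro v ⟨hvq, hv1, hv2⟩
    have hne : (lamS F a (n1+q) ∩ Set.Ico α v).Nonempty := ⟨α, hαq, le_refl _, hv1⟩
    have hfin : (lamS F a (n1+q) ∩ Set.Ico α v).Finite :=
      (lamS_finite_icc hax hFmono α v).subset
        (Set.inter_subset_inter_right _ Set.Ico_subset_Icc_self)
    obtain ⟨hmq, hmI⟩ := hne.csSup_mem hfin
    refine ⟨hmq, hmI.1, hmI.2, ?_⟩
    intro w hw hwI
    have hwmem : w ∈ lamS F a (n1+q) ∩ Set.Ico α v :=
      ⟨hw, le_trans hmI.1 (le_of_lt hwI.1), hwI.2⟩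
    exact absurd (le_csSup hfin.bddAbove hwmem) (not_le.mpr hwI.1)
  have hinjθ : Set.InjOn θ (lamS F a (n1+q) ∩ Set.Ioc α β) := by
    have key : ∀ v ∈ lamS F a (n1+q) ∩ Set.Ioc α β,
        ∀ v' ∈ lamS F a (n1+q) ∩ Set.Ioc α β, θ v = θ v' → v ≤ v' := by
      intro v hv v' hv' hθeq
      obtain ⟨-, hg1, hg2, -⟩ := hgv v hv
      obtain ⟨-, hg1', -, -⟩ := hgv v' hv'
      have hTv : expMap v ∈ θ v := ⟨v, ⟨le_of_lt hg2, le_refl _⟩, rfl⟩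
      rw [hθeq] at hTv
      obtain ⟨s', hs', heq⟩ := hTv
      obtain ⟨k, hk⟩ := expMap_eq_iff.mp heq
      have hb1 : α ≤ s' := le_trans hg1' hs'.1
      have hb2 : s' ≤ β := le_trans hs'.2 hv'.2.2
      have hb3 : α < v := hv.2.1
      have hb4 : v ≤ β := hv.2.2
      have hk0 : k = 0 := by
        have h1 : ((k:ℝ)) = s' - v := by linarith [hk]
        have h2 : (-1:ℝ) < (k:ℝ) := by rw [h1]; linarith
        have h3 : (k:ℝ) < 1 := by rw [h1]; linarith
        have h2' : (-1:ℤ) < k := by exact_mod_cast h2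
        have h3' : k < 1 := by exact_mod_cast h3
        omega
      have hvs : s' = v := by
        rw [hk0] at hk
        push_cast at hk
        linarith
      rw [← hvs]
      exact hs'.2
    intro v hv v' hv' hθeq
    exact le_antisymm (key v hv v' hv' hθeq) (key v' hv' v hv hθeq.symm)
  have hSETEQ : {B : Set ℂ | IsComplArc f a ((n1+q)+1) B ∧ B ⊆ A} =
      θ '' (lamS F a (n1+q) ∩ Set.Ioc α β) := by
    apply le_antisymm
    · -- every complementary arc inside A is some θ v
      rintro B ⟨⟨z₁, hz₁, hBeq⟩, hBA⟩
      obtain ⟨t₁, ht₁⟩ := expMap_surj hz₁.1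
      have ht₁q : t₁ ∉ lamS F a (n1+q) := by
        intro h
        exact hz₁.2 (ht₁ ▸ (mem_Fset_iff hFe).mpr h)
      obtain ⟨γ, γ', hγm, hγ'm, hγt, htγ', hgapq⟩ :=
        gap_exists (lamS_closed hFc) (lamS_per hFe) (lamS_nonempty hax hFe hinv) ht₁q
      have hγγ' : γ < γ' := lt_trans hγt htγ'
      have hBe : B = expMap '' Set.Icc γ γ' := by
        rw [hBeq, ← ht₁]
        rw [componentIn_eq ((mem_Fset_iff hFe).mpr hγm) ((mem_Fset_iff hFe).mpr hγ'm) hγt htγ'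
          (fun w hw1 hw2 hwK => hgapq w ((mem_Fset_iff hFe).mp hwK) ⟨hw1, hw2⟩)]
        exact closure_image_Ioo hγγ'
      -- find the shift
      have hz₁A : expMap t₁ ∈ A := by
        rw [ht₁]
        exact hBA (hBeq ▸ subset_closure (mem_connectedComponentIn hz₁))
      rw [hAe] at hz₁A
      obtain ⟨s₂, hs₂I, hs₂e⟩ := hz₁A
      obtain ⟨k, hk⟩ := expMap_eq_iff.mp hs₂e
      -- s₂ = t₁ + k
      have hs₂q : s₂ ∉ lamS F a (n1+q) := by
        intro h
        rw [hk] at h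
        exact ht₁q ((lamS_shift hFe k).mp h)
      have hs₂I' : s₂ ∈ Set.Ioo α β := by
        rcases eq_or_lt_of_le hs₂I.1 with h | h
        · exact absurd (h ▸ hαq) hs₂q
        rcases eq_or_lt_of_le hs₂I.2 with h' | h'
        · exact absurd (h' ▸ hβq) hs₂q
        · exact ⟨h, h'⟩
      -- shifted gap around s₂
      have hγkq : γ + (k:ℝ) ∈ lamS F a (n1+q) := (lamS_shift hFe k).mpr hγm
      have hγ'kq : γ' + (k:ℝ) ∈ lamS F a (n1+q) := (lamS_shift hFe k).mpr hγ'm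
      have hγks : γ + (k:ℝ) < s₂ := by rw [hk]; linarith
      have hsγ'k : s₂ < γ' + (k:ℝ) := by rw [hk]; linarith
      have hgapk : ∀ w ∈ lamS F a (n1+q), w ∉ Set.Ioo (γ + (k:ℝ)) (γ' + (k:ℝ)) := by
        intro w hw hwI
        have hw' : w - k ∈ lamS F a (n1+q) := by
          have h9 : w - (k:ℝ) + (k:ℝ) ∈ lamS F a (n1+q) := by
            have : w - (k:ℝ) + (k:ℝ) = w := by ring
            rw [this]
            exact hw
          exact (lamS_shift hFe k).mp h9
        exact hgapq (w - k) hw' ⟨by linarith [hwI.1], by linarith [hwI.2]⟩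
      -- the right endpoint
      have hvmem : γ' + (k:ℝ) ∈ lamS F a (n1+q) ∩ Set.Ioc α β := by
        refine ⟨hγ'kq, lt_trans hs₂I'.1 hsγ'k, ?_⟩
        by_contra hcon
        push_neg at hcon
        exact hgapk β hβq ⟨lt_trans hγks hs₂I'.2, hcon⟩
      refine ⟨γ' + (k:ℝ), hvmem, ?_⟩
      -- compute θ (γ' + k)
      have hγkα : α ≤ γ + (k:ℝ) := by
        by_contra hcon
        push_neg at hcon
        exact hgapk α hαq ⟨hcon, lt_trans hs₂I'.1 hsγ'k⟩
      have hsup : sSup (lamS F a (n1+q) ∩ Set.Ico α (γ' + (k:ℝ))) = γ + (k:ℝ) := by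
        have hne : (lamS F a (n1+q) ∩ Set.Ico α (γ' + (k:ℝ))).Nonempty :=
          ⟨γ + (k:ℝ), hγkq, hγkα, by linarith⟩
        have hfin : (lamS F a (n1+q) ∩ Set.Ico α (γ' + (k:ℝ))).Finite :=
          (lamS_finite_icc hax hFmono α (γ' + (k:ℝ))).subset
            (Set.inter_subset_inter_right _ Set.Ico_subset_Icc_self)
        apply le_antisymm
        · apply csSup_le hne
          rintro w ⟨hwq, hwα, hwv⟩
          by_contra hcon
          push_neg at hcon
          exact hgapk w hwq ⟨hcon, hwv⟩
        · exact le_csSup hfin.bddAbove ⟨hγkq, hγkα, by linarith⟩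
      show θ (γ' + (k:ℝ)) = B
      rw [hθ]
      simp only
      rw [hsup, image_Icc_shift, ← hBe]
    · -- every θ v is a complementary arc inside A
      rintro B ⟨v, hv, rfl⟩
      obtain ⟨hg0, hg1, hg2, hg3⟩ := hgv v hv
      set g := sSup (lamS F a (n1+q) ∩ Set.Ico α v) with hgdef
      have hmid : g < (g + v)/2 ∧ (g + v)/2 < v := ⟨by linarith, by linarith⟩
      have hmidq : (g + v)/2 ∉ lamS F a (n1+q) := by
        intro h
        exact hg3 _ h ⟨hmid.1, hmid.2⟩
      constructor
      · refine ⟨expMap ((g + v)/2), ⟨expMap_mem_S1 _, ?_⟩, ?_⟩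
        · intro h
          exact hmidq ((mem_Fset_iff hFe).mp h)
        · rw [componentIn_eq ((mem_Fset_iff hFe).mpr hg0) ((mem_Fset_iff hFe).mpr hv.1)
            hmid.1 hmid.2
            (fun w hw1 hw2 hwK => hg3 w ((mem_Fset_iff hFe).mp hwK) ⟨hw1, hw2⟩)]
          exact (closure_image_Ioo hg2).symm
      · rw [hAe]
        apply Set.image_mono
        exact Set.Icc_subset_Icc hg1 hv.2.2
  have hIocfin : (lamS F a (n1+q) ∩ Set.Ioc α β).Finite :=
    (lamS_finite_icc hax hFmono α β).subset
      (Set.inter_subset_inter_right _ Set.Ioc_subset_Icc_self)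
  have hIoc_card : (lamS F a (n1+q) ∩ Set.Ioc α β).ncard = E.ncard + 1 := by
    have hsplit : lamS F a (n1+q) ∩ Set.Ioc α β = E ∪ {β} := by
      rw [hE]
      ext w
      simp only [Set.mem_inter_iff, Set.mem_Ioc, Set.mem_Ioo, Set.mem_union,
        Set.mem_singleton_iff]
      constructor
      · rintro ⟨hw, hw1, hw2⟩
        rcases eq_or_lt_of_le hw2 with h | h
        · exact Or.inr h
        · exact Or.inl ⟨hw, hw1, h⟩
      · rintro (⟨hw, hw1, hw2⟩ | h)
        · exact ⟨hw, hw1, le_of_lt hw2⟩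
        · subst h; exact ⟨hβq, hαβ, le_refl _⟩
    rw [hsplit, Set.ncard_union_eq ?_ hEfin (Set.finite_singleton β), Set.ncard_singleton]
    rw [Set.disjoint_left]
    rintro w ⟨-, hw⟩ hwmem
    rw [Set.mem_singleton_iff] at hwmem
    subst hwmem
    exact lt_irrefl _ hw.2
  -- upper bound for E
  have htrans : ∀ t : ℝ, t ∈ lamS F a (n1+q) ↔ F^[n1] t ∈ lamS F a q := by
    intro t
    have h9 := mem_lamS_add (F := F) (a := a) (i := q) (j := n1) (t := t)
    rwa [show q + n1 = n1 + q from by omega] at h9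
  have htrans0 : ∀ t : ℝ, t ∈ lamS F a n1 ↔ F^[n1] t ∈ lamS F a 0 := by
    intro t
    have h9 := mem_lamS_add (F := F) (a := a) (i := 0) (j := n1) (t := t)
    rwa [Nat.zero_add] at h9
  have hHc : Continuous (F^[n1]) := hFc.iterate n1
  have hHmono := mono_or_anti_iterate hFmono n1
  have hαP : F^[n1] α ∈ lamS F a 0 := (htrans0 α).mp hαm
  have hβP : F^[n1] β ∈ lamS F a 0 := (htrans0 β).mp hβm
  have hupper : E.ncard ≤ (r+1)^q - 1 := by
    rcases hHmono with hm | hm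
    · have hcc : F^[n1] α < F^[n1] β := hm hαβ
      have himg : F^[n1] '' E = lamS F a q ∩ Set.Ioo (F^[n1] α) (F^[n1] β) := by
        apply le_antisymm
        · rintro w ⟨t, ⟨htq, htI⟩, rfl⟩
          exact ⟨(htrans t).mp htq, hm htI.1, hm htI.2⟩
        · rintro w ⟨hwq, hwI⟩
          obtain ⟨t, htI, hts⟩ := intermediate_value_Ioo (le_of_lt hαβ) hHc.continuousOn hwI
          exact ⟨t, ⟨(htrans t).mpr (hts ▸ hwq), htI⟩, hts⟩
      have hgapP : ∀ w ∈ lamS F a 0, w ∉ Set.Ioo (F^[n1] α) (F^[n1] β) := by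
        intro w hw hwI
        obtain ⟨t, htI, hts⟩ := intermediate_value_Ioo (le_of_lt hαβ) hHc.continuousOn hwI
        exact hgapn t ((htrans0 t).mpr (by rw [hts]; exact hw)) htI
      have := count_upper hax hxm hxl hr hFc hFe hFmono hinv hinjf q
        (F^[n1] α) (F^[n1] β) hαP hβP hcc hgapP
      calc E.ncard = (F^[n1] '' E).ncard := (Set.ncard_image_of_injOn hm.injective.injOn).symm
        _ = (lamS F a q ∩ Set.Ioo (F^[n1] α) (F^[n1] β)).ncard := by rw [himg]
        _ ≤ (r+1)^q - 1 := this
    · have hcc : F^[n1] β < F^[n1] α := hm hαβ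
      have himg : F^[n1] '' E = lamS F a q ∩ Set.Ioo (F^[n1] β) (F^[n1] α) := by
        apply le_antisymm
        · rintro w ⟨t, ⟨htq, htI⟩, rfl⟩
          exact ⟨(htrans t).mp htq, hm htI.2, hm htI.1⟩
        · rintro w ⟨hwq, hwI⟩
          obtain ⟨t, htI, hts⟩ := intermediate_value_Ioo' (le_of_lt hαβ) hHc.continuousOn hwI
          exact ⟨t, ⟨(htrans t).mpr (hts ▸ hwq), htI⟩, hts⟩
      have hgapP : ∀ w ∈ lamS F a 0, w ∉ Set.Ioo (F^[n1] β) (F^[n1] α) := by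
        intro w hw hwI
        obtain ⟨t, htI, hts⟩ := intermediate_value_Ioo' (le_of_lt hαβ) hHc.continuousOn hwI
        exact hgapn t ((htrans0 t).mpr (by rw [hts]; exact hw)) htI
      have := count_upper hax hxm hxl hr hFc hFe hFmono hinv hinjf q
        (F^[n1] β) (F^[n1] α) hβP hαP hcc hgapP
      calc E.ncard = (F^[n1] '' E).ncard := (Set.ncard_image_of_injOn hm.injective.injOn).symm
        _ = (lamS F a q ∩ Set.Ioo (F^[n1] β) (F^[n1] α)).ncard := by rw [himg]
        _ ≤ (r+1)^q - 1 := this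
  -- lower bound for E
  have hlower : E.Nonempty := by
    by_contra hemp
    rw [Set.not_nonempty_iff_eq_empty] at hemp
    obtain ⟨e, he, G₀, hG₀c, hG₀e, hG₀d⟩ := hq.2.2.1
    -- G₀ differs from F^[q] by an integer constant, hence is strictly monotone
    obtain ⟨kc, hkc⟩ := lift_unique hG₀c (hFc.iterate q) (fun t => by
      rw [← hG₀e, iterate_lift hFe])
    have hG₀ma : StrictMono G₀ ∨ StrictAnti G₀ := by
      have hfun : G₀ = fun t => F^[q] t + (kc:ℝ) := funext hkc
      rcases mono_or_anti_iterate hFmono q with hmq | hmq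
      · left; rw [hfun]; exact fun s t hst => by simpa using hmq hst
      · right; rw [hfun]; exact fun s t hst => by simpa using hmq hst
    have hG₀m : StrictMono G₀ := by
      rcases hG₀ma with h | h
      · exact h
      · exfalso
        have h1 : G₀ 1 < G₀ 0 := h zero_lt_one
        have h2 : G₀ (0 + 1) = G₀ 0 + e := hG₀d 0
        rw [zero_add] at h2
        have : (0:ℝ) < (e:ℝ) := by exact_mod_cast he
        linarith
    -- the fixed lift point
    have hy_per : expMap (G₀ (F^[n1] s)) = expMap (F^[n1] s) := by
      rw [← hG₀e, ← iterate_lift hFe, hsa0]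
      have h1 : f^[q] (f^[n1] a0) = f^[q + n1] a0 := (Function.iterate_add_apply f q n1 a0).symm
      have h2 : f^[n1 + q] a0 = f^[n1] (f^[q] a0) := Function.iterate_add_apply f n1 q a0
      rw [h1, show q + n1 = n1 + q from by omega, h2, hq.2.1, ← hsa0, iterate_lift hFe]
    obtain ⟨kG, hkG⟩ := expMap_eq_iff.mp hy_per
    -- the normalized lift G of the return map
    set G : ℝ → ℝ := fun t => G₀ t - kG with hGdef
    have hGc : Continuous G := hG₀c.sub continuous_const
    have hGe : ∀ t, f^[q] (expMap t) = expMap (G t) := by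
      intro t
      rw [hG₀e]
      exact expMap_eq_iff.mpr ⟨kG, by simp [hGdef]⟩
    have hGm : StrictMono G := fun u v huv => by
      simp only [hGdef]
      have := hG₀m huv
      simpa using this
    have hGy : G (F^[n1] s) = F^[n1] s := by
      simp only [hGdef]
      linarith [hkG]
    -- the invariant interval
    have hne9 : F^[n1] α ≠ F^[n1] β := by
      rcases hHmono with hm | hm
      · exact ne_of_lt (hm hαβ)
      · exact ne_of_gt (hm hαβ)
    set u' := min (F^[n1] α) (F^[n1] β) with hu'
    set v' := max (F^[n1] α) (F^[n1] β) with hv'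
    have huv' : u' < v' := min_lt_max.mpr hne9
    have hyuv : F^[n1] s = u' ∨ F^[n1] s = v' := by
      rcases hsend with rfl | rfl
      · rcases le_total (F^[n1] s) (F^[n1] β) with h | h
        · left; rw [hu', min_eq_left h]
        · right; rw [hv', max_eq_left h]
      · rcases le_total (F^[n1] s) (F^[n1] α) with h | h
        · left; rw [hu', min_eq_right h]
        · right; rw [hv', max_eq_right h]
    have hPu : u' ∈ lamS F a 0 := by
      rcases le_total (F^[n1] α) (F^[n1] β) with h | h
      · rw [hu', min_eq_left h]; exact hαP
      · rw [hu', min_eq_right h]; exact hβP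
    have hPv : v' ∈ lamS F a 0 := by
      rcases le_total (F^[n1] α) (F^[n1] β) with h | h
      · rw [hv', max_eq_right h]; exact hβP
      · rw [hv', max_eq_left h]; exact hαP
    -- no return-map lift points inside the interval
    have hIooq : ∀ w ∈ lamS F a q, w ∉ Set.Ioo u' v' := by
      intro w hw hwI
      have hwI' : w ∈ Set.Ioo (min (F^[n1] α) (F^[n1] β)) (max (F^[n1] α) (F^[n1] β)) := hwI
      obtain ⟨t, htI, hts⟩ : ∃ t ∈ Set.Ioo α β, F^[n1] t = w := by
        rcases hHmono with hm | hm
        · have h1 : min (F^[n1] α) (F^[n1] β) = F^[n1] α := min_eq_left (le_of_lt (hm hαβ))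
          have h2 : max (F^[n1] α) (F^[n1] β) = F^[n1] β := max_eq_right (le_of_lt (hm hαβ))
          rw [h1, h2] at hwI'
          obtain ⟨t, htI, hts⟩ := intermediate_value_Ioo (le_of_lt hαβ) hHc.continuousOn hwI'
          exact ⟨t, htI, hts⟩
        · have h1 : min (F^[n1] α) (F^[n1] β) = F^[n1] β := min_eq_right (le_of_lt (hm hαβ))
          have h2 : max (F^[n1] α) (F^[n1] β) = F^[n1] α := max_eq_left (le_of_lt (hm hαβ))
          rw [h1, h2] at hwI'
          obtain ⟨t, htI, hts⟩ := intermediate_value_Ioo' (le_of_lt hαβ) hHc.continuousOn hwI'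
          exact ⟨t, htI, hts⟩
      have htq : t ∈ lamS F a (n1+q) := (htrans t).mpr (by rw [hts]; exact hw)
      have : t ∈ E := ⟨htq, htI⟩
      rw [hemp] at this
      exact this
    have hIoo0 : ∀ w ∈ lamS F a 0, w ∉ Set.Ioo u' v' :=
      fun w hw => hIooq w (hq_mem (Nat.zero_le q) hw)
    have hlen' : v' - u' < 1 := gap_lt_one hax hxm hxl hr (subset_refl _) huv' hIoo0
    -- G-image criterion
    have hGP : ∀ t : ℝ, G t ∈ lamS F a 0 ↔ t ∈ lamS F a q := by
      intro t
      rw [mem_lamS_zero]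
      have h9 : expMap (G t) = expMap (F^[q] t) := by
        rw [← hGe, iterate_lift hFe]
      rw [h9]
      rfl
    -- invariance of the interval under G
    have hGinv : ∀ t ∈ Set.Icc u' v', G t ∈ Set.Icc u' v' := by
      rcases hyuv with hy | hy
      · -- G fixes the left endpoint
        have hGu : G u' = u' := by rw [← hy]; exact hGy
        intro t htm
        constructor
        · calc u' = G u' := hGu.symm
            _ ≤ G t := hGm.monotone htm.1
        · by_contra hcon
          push_neg at hcon
          have h1 : v' ∈ Set.Ioo (G u') (G t) := ⟨by rw [hGu]; exact huv', hcon⟩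
          obtain ⟨w, hwI, hwG⟩ := intermediate_value_Ioo htm.1 hGc.continuousOn h1
          have hwq : w ∈ lamS F a q := (hGP w).mp (by rw [hwG]; exact hPv)
          exact hIooq w hwq ⟨hwI.1, lt_of_lt_of_le hwI.2 htm.2⟩
      · -- G fixes the right endpoint
        have hGv : G v' = v' := by rw [← hy]; exact hGy
        intro t htm
        constructor
        · by_contra hcon
          push_neg at hcon
          have h1 : u' ∈ Set.Ioo (G t) (G v') := ⟨hcon, by rw [hGv]; exact huv'⟩
          obtain ⟨w, hwI, hwG⟩ := intermediate_value_Ioo htm.2 hGc.continuousOn h1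
          have hwq : w ∈ lamS F a q := (hGP w).mp (by rw [hwG]; exact hPu)
          exact hIooq w hwq ⟨lt_of_le_of_lt htm.1 hwI.1, hwI.2⟩
        · calc G t ≤ G v' := hGm.monotone htm.2
            _ = v' := hGv
    exact engine hq0 hexp hFc hFe hGc hGe hGm huv' hlen' hGinv
  -- conclusion
  have hfin : {B : Set ℂ | IsComplArc f a ((n1+q)+1) B ∧ B ⊆ A}.Finite := by
    rw [hSETEQ]
    exact hIocfin.image θ
  have hcard : {B : Set ℂ | IsComplArc f a ((n1+q)+1) B ∧ B ⊆ A}.ncard = E.ncard + 1 := by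
    rw [hSETEQ, Set.ncard_image_of_injOn hinjθ, hIoc_card]
  refine ⟨hfin, ?_, ?_⟩
  · rw [hcard]
    have := hEfin
    have h1 : 1 ≤ E.ncard := by
      rw [Nat.one_le_iff_ne_zero]
      intro h0
      rw [Set.ncard_eq_zero hEfin] at h0
      rw [h0] at hlower
      exact Set.not_nonempty_empty hlower
    omega
  · rw [hcard]
    have h1 : 1 ≤ (r+1)^q := Nat.one_le_pow _ _ (by omega)
    omega
end
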